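/- arXiv:2005.06116 — 5 statements merged into one kernel-verified Lean document; each statement's English description precedes it below -/
import Mathlib

section
/- Let κ > 0 and define τ(t) = exp( i t^{1+1/κ} / (log t)^{1/κ} ) for t ≥ e and τ(t) = 0 for 0 ≤ t < e. There exists a constant c ∈ ℂ such that, as x → ∞, ∫₀^x τ(t) dt = c + exp( i x (x/ log x)^{1/κ} ) / ( i (1 + 1/κ) ) · ( log x / x )^{1/κ} + O( (log x)^{1/κ − 1} / x^{1/κ} ). -/
open MeasureTheory Set Filter Asymptotics

noncomputable def Mf (p q t : ℝ) : ℝ := t ^ p * Real.log t ^ q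

lemma Mf_pos {t : ℝ} (ht : 1 < t) (p q : ℝ) : 0 < Mf p q t :=
  mul_pos (Real.rpow_pos_of_pos (lt_trans one_pos ht) _)
    (Real.rpow_pos_of_pos (Real.log_pos ht) _)

lemma Mf_mul {t : ℝ} (ht : 1 < t) (p q p' q' : ℝ) :
    Mf p q t * Mf p' q' t = Mf (p + p') (q + q') t := by
  unfold Mf
  rw [Real.rpow_add (lt_trans one_pos ht), Real.rpow_add (Real.log_pos ht)]
  ring

lemma Mf_le_Mf {t : ℝ} (ht : 1 < t) (hL : 1 ≤ Real.log t) {p q q' : ℝ} (h : q ≤ q') :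
    Mf p q t ≤ Mf p q' t := by
  unfold Mf
  exact mul_le_mul_of_nonneg_left (Real.rpow_le_rpow_of_exponent_le hL h)
    (Real.rpow_nonneg (le_of_lt (lt_trans one_pos ht)) _)

lemma hasDerivAt_Mf (p q : ℝ) {t : ℝ} (ht : 1 < t) :
    HasDerivAt (Mf p q) (p * Mf (p - 1) q t + q * Mf (p - 1) (q - 1) t) t := by
  have ht0 : (0:ℝ) < t := lt_trans one_pos ht
  have hL : 0 < Real.log t := Real.log_pos ht
  have h1 : HasDerivAt (fun s : ℝ => s ^ p) (p * t ^ (p - 1)) t :=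
    Real.hasDerivAt_rpow_const (Or.inl ht0.ne')
  have h2 : HasDerivAt (fun s : ℝ => Real.log s ^ q)
      (q * Real.log t ^ (q - 1) * t⁻¹) t :=
    (Real.hasDerivAt_rpow_const (p := q) (Or.inl hL.ne')).comp t (Real.hasDerivAt_log ht0.ne')
  have := h1.mul h2
  refine this.congr_deriv (Eq.symm ?_)
  unfold Mf
  have hts : t ^ p * t⁻¹ = t ^ (p - 1) := by
    rw [Real.rpow_sub ht0, Real.rpow_one, div_eq_mul_inv]
  calc p * (t ^ (p-1) * Real.log t ^ q) + q * (t ^ (p-1) * Real.log t ^ (q-1))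
      = p * t ^ (p-1) * Real.log t ^ q + (t ^ p * t⁻¹) * (q * Real.log t ^ (q-1)) := by
        rw [hts]; ring
    _ = p * t ^ (p - 1) * Real.log t ^ q + t ^ p * (q * Real.log t ^ (q - 1) * t⁻¹) := by ring

noncomputable def Df (b t : ℝ) : ℝ := (b+1) * Mf b (-b) t - b * Mf b (-b-1) t

noncomputable def Df1 (b t : ℝ) : ℝ :=
  (b+1)*b * Mf (b-1) (-b) t - ((b+1)*b + b*b) * Mf (b-1) (-b-1) t
    + (b+1)*b * Mf (b-1) (-b-2) t

noncomputable def Df2 (b t : ℝ) : ℝ :=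
  (b+1)*b * ((b-1) * Mf (b-2) (-b) t + (-b) * Mf (b-2) (-b-1) t)
  - ((b+1)*b + b*b) * ((b-1) * Mf (b-2) (-b-1) t + (-b-1) * Mf (b-2) (-b-2) t)
  + (b+1)*b * ((b-1) * Mf (b-2) (-b-2) t + (-b-2) * Mf (b-2) (-b-3) t)

lemma hasDerivAt_Df (b : ℝ) {t : ℝ} (ht : 1 < t) :
    HasDerivAt (Df b) (Df1 b t) t := by
  have h1 := (hasDerivAt_Mf b (-b) ht).const_mul (b+1)
  have h2 := (hasDerivAt_Mf b (-b-1) ht).const_mul b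
  refine (h1.sub h2).congr_deriv (Eq.symm ?_)
  rw [show (-b-1-1 : ℝ) = -b-2 from by ring]
  unfold Df1; ring

lemma hasDerivAt_Df1 (b : ℝ) {t : ℝ} (ht : 1 < t) :
    HasDerivAt (Df1 b) (Df2 b t) t := by
  have h1 := (hasDerivAt_Mf (b-1) (-b) ht).const_mul ((b+1)*b)
  have h2 := (hasDerivAt_Mf (b-1) (-b-1) ht).const_mul ((b+1)*b + b*b)
  have h3 := (hasDerivAt_Mf (b-1) (-b-2) ht).const_mul ((b+1)*b)
  refine ((h1.sub h2).add h3).congr_deriv (Eq.symm ?_)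
  rw [show (-b-1-1 : ℝ) = -b-2 from by ring, show (-b-2-1 : ℝ) = -b-3 from by ring,
    show (b-1-1 : ℝ) = b-2 from by ring]
  unfold Df2; ring

lemma Mf_inv {t : ℝ} (ht : 1 < t) (p q : ℝ) : (Mf p q t)⁻¹ = Mf (-p) (-q) t := by
  have h : Mf p q t * Mf (-p) (-q) t = 1 := by
    rw [Mf_mul ht]; simp [Mf, Real.rpow_zero]
  field_simp [(Mf_pos ht p q).ne']
  linarith [h]

lemma Mf_neg_le_one {t : ℝ} (ht : 1 < t) {e : ℝ} (he : 0 ≤ e) : Mf (-e) e t ≤ 1 := by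
  have ht0 : (0:ℝ) < t := lt_trans one_pos ht
  have hL : 0 < Real.log t := Real.log_pos ht
  have h1 : Mf (-e) e t = (Real.log t / t) ^ e := by
    rw [Real.div_rpow hL.le ht0.le, Mf, Real.rpow_neg ht0.le]
    ring
  rw [h1]
  apply Real.rpow_le_one (div_nonneg hL.le ht0.le) _ he
  rw [div_le_one ht0]
  linarith [Real.log_le_sub_one_of_pos ht0]

lemma abs_div_le {t N A D p q r s : ℝ} (ht : 1 < t) (hnum : |N| ≤ A * Mf p q t)
    (hden : Mf r s t ≤ D) :
    |N / D| ≤ A * Mf (p - r) (q - s) t := by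
  have hDpos : 0 < D := lt_of_lt_of_le (Mf_pos ht r s) hden
  have hA : 0 ≤ A * Mf p q t := le_trans (abs_nonneg _) hnum
  rw [abs_div, abs_of_pos hDpos]
  have key : Mf (p - r) (q - s) t * Mf r s t = Mf p q t := by
    rw [Mf_mul ht, sub_add_cancel, sub_add_cancel]
  calc |N| / D ≤ (A * Mf p q t) / Mf r s t :=
        div_le_div₀ hA hnum (Mf_pos ht r s) hden
    _ = A * Mf (p - r) (q - s) t := by
        rw [← key, mul_div_assoc, mul_div_cancel_right₀ _ (Mf_pos ht r s).ne']

noncomputable def C1 (b : ℝ) : ℝ := (b+1)*b + ((b+1)*b + b*b) + (b+1)*b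

noncomputable def C2 (b : ℝ) : ℝ :=
  (b+1)*b*(2*b+1) + ((b+1)*b + b*b)*(2*b+2) + (b+1)*b*(2*b+3)

lemma Df_lower {b t : ℝ} (hb : 0 < b) (ht : 1 < t) (hL : 1 ≤ Real.log t) :
    Mf b (-b) t ≤ Df b t := by
  have h := Mf_le_Mf ht hL (p := b) (show -b-1 ≤ -b by linarith)
  have hp := Mf_pos ht b (-b-1)
  unfold Df; nlinarith

lemma Df_pos {b t : ℝ} (hb : 0 < b) (ht : 1 < t) (hL : 1 ≤ Real.log t) :
    0 < Df b t := lt_of_lt_of_le (Mf_pos ht b (-b)) (Df_lower hb ht hL)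

lemma Df_upper {b t : ℝ} (hb : 0 < b) (ht : 1 < t) :
    Df b t ≤ (b+1) * Mf b (-b) t := by
  have hp := Mf_pos ht b (-b-1)
  unfold Df; nlinarith

lemma Df1_abs {b t : ℝ} (hb : 0 < b) (ht : 1 < t) (hL : 1 ≤ Real.log t) :
    |Df1 b t| ≤ C1 b * Mf (b-1) (-b) t := by
  have h1 := Mf_le_Mf ht hL (p := b-1) (show -b-1 ≤ -b by linarith)
  have h2 := Mf_le_Mf ht hL (p := b-1) (show -b-2 ≤ -b by linarith)
  have p0 := Mf_pos ht (b-1) (-b)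
  have p1 := Mf_pos ht (b-1) (-b-1)
  have p2 := Mf_pos ht (b-1) (-b-2)
  rw [abs_le]; constructor <;> [skip; skip] <;> unfold Df1 C1 <;> nlinarith

lemma abs_lin {c1 c2 d1 d2 m0 x y : ℝ} (h1 : |c1| ≤ d1) (h2 : |c2| ≤ d2)
    (hx0 : 0 < x) (hy0 : 0 < y) (hxm : x ≤ m0) (hym : y ≤ m0) :
    |c1*x + c2*y| ≤ (d1+d2)*m0 := by
  calc |c1*x + c2*y| ≤ |c1*x| + |c2*y| := abs_add_le _ _
    _ = |c1| * x + |c2| * y := by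
        rw [abs_mul, abs_mul, abs_of_pos hx0, abs_of_pos hy0]
    _ ≤ d1*m0 + d2*m0 :=
        add_le_add (mul_le_mul h1 hxm hx0.le (le_trans (abs_nonneg _) h1))
          (mul_le_mul h2 hym hy0.le (le_trans (abs_nonneg _) h2))
    _ = (d1+d2)*m0 := by ring

lemma Df2_abs {b t : ℝ} (hb : 0 < b) (ht : 1 < t) (hL : 1 ≤ Real.log t) :
    |Df2 b t| ≤ C2 b * Mf (b-2) (-b) t := by
  have h1 := Mf_le_Mf ht hL (p := b-2) (show -b-1 ≤ -b by linarith)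
  have h2 := Mf_le_Mf ht hL (p := b-2) (show -b-2 ≤ -b by linarith)
  have h3 := Mf_le_Mf ht hL (p := b-2) (show -b-3 ≤ -b by linarith)
  have p0 := Mf_pos ht (b-2) (-b)
  have p1 := Mf_pos ht (b-2) (-b-1)
  have p2 := Mf_pos ht (b-2) (-b-2)
  have p3 := Mf_pos ht (b-2) (-b-3)
  have hb1 : |b - 1| ≤ b + 1 := abs_le.mpr ⟨by linarith, by linarith⟩
  have hnb : |(-b)| ≤ b := by rw [abs_neg, abs_of_pos hb]
  have hnb1 : |(-b-1)| ≤ b+1 := by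
    rw [show (-b-1 : ℝ) = -(b+1) by ring, abs_neg, abs_of_pos (by linarith)]
  have hnb2 : |(-b-2)| ≤ b+2 := by
    rw [show (-b-2 : ℝ) = -(b+2) by ring, abs_neg, abs_of_pos (by linarith)]
  have e1 : |(b-1) * Mf (b-2) (-b) t + (-b) * Mf (b-2) (-b-1) t|
      ≤ ((b+1)+b) * Mf (b-2) (-b) t := abs_lin hb1 hnb p0 p1 le_rfl h1
  have e2 : |(b-1) * Mf (b-2) (-b-1) t + (-b-1) * Mf (b-2) (-b-2) t|
      ≤ ((b+1)+(b+1)) * Mf (b-2) (-b) t := abs_lin hb1 hnb1 p1 p2 h1 h2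
  have e3 : |(b-1) * Mf (b-2) (-b-2) t + (-b-2) * Mf (b-2) (-b-3) t|
      ≤ ((b+1)+(b+2)) * Mf (b-2) (-b) t := abs_lin hb1 hnb2 p2 p3 h2 h3
  have hA : (0:ℝ) ≤ (b+1)*b := by positivity
  have hB : (0:ℝ) ≤ (b+1)*b + b*b := by positivity
  calc |Df2 b t| ≤ |(b+1)*b * ((b-1) * Mf (b-2) (-b) t + (-b) * Mf (b-2) (-b-1) t)|
        + |((b+1)*b + b*b) * ((b-1) * Mf (b-2) (-b-1) t + (-b-1) * Mf (b-2) (-b-2) t)|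
        + |(b+1)*b * ((b-1) * Mf (b-2) (-b-2) t + (-b-2) * Mf (b-2) (-b-3) t)| := by
          unfold Df2
          exact (abs_add_le _ _).trans (add_le_add_left (abs_sub _ _) _)
    _ ≤ (b+1)*b * (((b+1)+b) * Mf (b-2) (-b) t)
        + ((b+1)*b + b*b) * (((b+1)+(b+1)) * Mf (b-2) (-b) t)
        + (b+1)*b * (((b+1)+(b+2)) * Mf (b-2) (-b) t) := by
          have f1 : |(b+1)*b * ((b-1) * Mf (b-2) (-b) t + (-b) * Mf (b-2) (-b-1) t)|
              ≤ (b+1)*b * (((b+1)+b) * Mf (b-2) (-b) t) := by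
            rw [abs_mul, abs_of_nonneg hA]
            exact mul_le_mul_of_nonneg_left e1 hA
          have f2 : |((b+1)*b + b*b) * ((b-1) * Mf (b-2) (-b-1) t + (-b-1) * Mf (b-2) (-b-2) t)|
              ≤ ((b+1)*b + b*b) * (((b+1)+(b+1)) * Mf (b-2) (-b) t) := by
            rw [abs_mul, abs_of_nonneg hB]
            exact mul_le_mul_of_nonneg_left e2 hB
          have f3 : |(b+1)*b * ((b-1) * Mf (b-2) (-b-2) t + (-b-2) * Mf (b-2) (-b-3) t)|
              ≤ (b+1)*b * (((b+1)+(b+2)) * Mf (b-2) (-b) t) := by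
            rw [abs_mul, abs_of_nonneg hA]
            exact mul_le_mul_of_nonneg_left e3 hA
          exact add_le_add (add_le_add f1 f2) f3
    _ = C2 b * Mf (b-2) (-b) t := by unfold C2; ring

noncomputable def hf (b t : ℝ) : ℝ := Df1 b t / (Df b t)^3
noncomputable def hf1 (b t : ℝ) : ℝ :=
  (Df2 b t * Df b t - 3 * (Df1 b t)^2) / (Df b t)^4
noncomputable def C4 (b : ℝ) : ℝ := C2 b * (b+1) + 3 * (C1 b)^2

lemma hf_abs {b t : ℝ} (hb : 0 < b) (ht : 1 < t) (hL : 1 ≤ Real.log t) :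
    |hf b t| ≤ C1 b * Mf (-1-2*b) (2*b) t := by
  have pow3 : Mf b (-b) t ^ 3 = Mf (b+b+b) (-b+-b+-b) t := by
    rw [pow_succ, pow_succ, pow_one, Mf_mul ht, Mf_mul ht]
  have hden : Mf (b+b+b) (-b+-b+-b) t ≤ (Df b t)^3 := by
    rw [← pow3]
    exact pow_le_pow_left₀ (Mf_pos ht b (-b)).le (Df_lower hb ht hL) 3
  have := abs_div_le ht (Df1_abs hb ht hL) hden
  rw [show (b-1-(b+b+b) : ℝ) = -1-2*b by ring,
    show (-b-(-b+-b+-b) : ℝ) = 2*b by ring] at this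
  exact this

lemma hf1_abs {b t : ℝ} (hb : 0 < b) (ht : 1 < t) (hL : 1 ≤ Real.log t) :
    |hf1 b t| ≤ C4 b * Mf (-2-2*b) (2*b) t := by
  have pow4 : Mf b (-b) t ^ 4 = Mf (b+b+b+b) (-b+-b+-b+-b) t := by
    rw [pow_succ, pow_succ, pow_succ, pow_one, Mf_mul ht, Mf_mul ht, Mf_mul ht]
  have hden : Mf (b+b+b+b) (-b+-b+-b+-b) t ≤ (Df b t)^4 := by
    rw [← pow4]
    exact pow_le_pow_left₀ (Mf_pos ht b (-b)).le (Df_lower hb ht hL) 4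
  have hnum : |Df2 b t * Df b t - 3 * (Df1 b t)^2|
      ≤ C4 b * Mf ((b-2)+b) ((-b)+(-b)) t := by
    have n1 : |Df2 b t * Df b t| ≤ (C2 b * (b+1)) * Mf ((b-2)+b) ((-b)+(-b)) t := by
      rw [abs_mul, abs_of_pos (Df_pos hb ht hL), ← Mf_mul ht]
      calc |Df2 b t| * Df b t ≤ (C2 b * Mf (b-2) (-b) t) * ((b+1) * Mf b (-b) t) := by
            apply mul_le_mul (Df2_abs hb ht hL) (Df_upper hb ht)
              (Df_pos hb ht hL).le
            have : 0 < C2 b := by unfold C2; nlinarith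
            exact mul_nonneg this.le (Mf_pos ht _ _).le
        _ = (C2 b * (b+1)) * (Mf (b-2) (-b) t * Mf b (-b) t) := by ring
    have n2 : |3 * (Df1 b t)^2| ≤ (3 * (C1 b)^2) * Mf ((b-2)+b) ((-b)+(-b)) t := by
      have e : Mf (b-1) (-b) t ^ 2 = Mf ((b-2)+b) ((-b)+(-b)) t := by
        rw [pow_two, Mf_mul ht]
        congr 1 <;> ring
      have hsq : |Df1 b t|^2 ≤ (C1 b * Mf (b-1) (-b) t)^2 :=
        pow_le_pow_left₀ (abs_nonneg _) (Df1_abs hb ht hL) 2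
      calc |3 * (Df1 b t)^2| = 3 * |Df1 b t|^2 := by
            rw [abs_mul, abs_pow, abs_of_nonneg (by norm_num : (0:ℝ) ≤ 3)]
        _ ≤ 3 * (C1 b * Mf (b-1) (-b) t)^2 := by linarith
        _ = (3 * (C1 b)^2) * Mf ((b-2)+b) ((-b)+(-b)) t := by
            rw [mul_pow, e]; ring
    calc |Df2 b t * Df b t - 3 * (Df1 b t)^2|
        ≤ |Df2 b t * Df b t| + |3 * (Df1 b t)^2| := abs_sub _ _
      _ ≤ (C2 b * (b+1)) * Mf ((b-2)+b) ((-b)+(-b)) t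
          + (3 * (C1 b)^2) * Mf ((b-2)+b) ((-b)+(-b)) t := add_le_add n1 n2
      _ = C4 b * Mf ((b-2)+b) ((-b)+(-b)) t := by unfold C4; ring
  have := abs_div_le ht hnum hden
  rw [show ((b-2)+b-(b+b+b+b) : ℝ) = -2-2*b by ring,
    show ((-b)+(-b)-(-b+-b+-b+-b) : ℝ) = 2*b by ring] at this
  exact this

lemma Mf_key {b t : ℝ} (ht : 1 < t) :
    Df b t * Mf (-b) b t = (b+1) - b * (Real.log t)⁻¹ := by
  have m1 : Mf b (-b) t * Mf (-b) b t = 1 := by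
    rw [Mf_mul ht, show b + -b = (0:ℝ) by ring, show -b + b = (0:ℝ) by ring]
    unfold Mf; simp [Real.rpow_zero]
  have m2 : Mf b (-b-1) t * Mf (-b) b t = (Real.log t)⁻¹ := by
    rw [Mf_mul ht, show b + -b = (0:ℝ) by ring, show -b-1 + b = (-1:ℝ) by ring]
    unfold Mf; simp [Real.rpow_zero, Real.rpow_neg_one]
  unfold Df
  rw [sub_mul, mul_assoc, mul_assoc, m1, m2]; ring

lemma udiff_eq {b t : ℝ} (hb : 0 < b) (ht : 1 < t) (hL : 1 ≤ Real.log t) :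
    (Df b t)⁻¹ - Mf (-b) b t / (b+1) = b / ((b+1) * Real.log t * Df b t) := by
  have hD := (Df_pos hb ht hL).ne'
  have hLpos : (0:ℝ) < Real.log t := lt_of_lt_of_le one_pos hL
  have key := Mf_key (b := b) ht
  have hb1 : (b+1:ℝ) ≠ 0 := by positivity
  have e1 : (Df b t)⁻¹ - Mf (-b) b t / (b+1)
      = ((b+1) - Df b t * Mf (-b) b t) / ((b+1) * Df b t) := by
    rw [inv_eq_one_div, div_sub_div _ _ hD hb1]
    rw [div_eq_div_iff (mul_ne_zero hD hb1) (mul_ne_zero hb1 hD)]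
    ring
  rw [e1, key, show (b+1) - ((b+1) - b*(Real.log t)⁻¹) = b * (Real.log t)⁻¹ by ring]
  rw [div_eq_div_iff (mul_ne_zero hb1 hD) (mul_ne_zero (mul_ne_zero hb1 hLpos.ne') hD)]
  field_simp

lemma udiff_abs {b t : ℝ} (hb : 0 < b) (ht : 1 < t) (hL : 1 ≤ Real.log t) :
    |(Df b t)⁻¹ - Mf (-b) b t / (b+1)| ≤ (b/(b+1)) * Mf (-b) (b-1) t := by
  have hDpos := Df_pos hb ht hL
  have hLpos : (0:ℝ) < Real.log t := lt_of_lt_of_le one_pos hL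
  rw [udiff_eq hb ht hL]
  have g1 : Mf b (1-b) t ≤ Real.log t * Df b t := by
    have e : Mf b (1-b) t = Real.log t * Mf b (-b) t := by
      have : Mf 0 1 t * Mf b (-b) t = Mf (0+b) (1+-b) t := Mf_mul ht 0 1 b (-b)
      rw [show (0:ℝ)+b = b by ring, show (1:ℝ)+-b = 1-b by ring] at this
      rw [← this]
      congr 1
      unfold Mf; simp [Real.rpow_zero, Real.rpow_one]
    rw [e]
    exact mul_le_mul_of_nonneg_left (Df_lower hb ht hL) hLpos.le
  have g2 : (Real.log t * Df b t)⁻¹ ≤ Mf (-b) (b-1) t := by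
    rw [show Mf (-b) (b-1) t = (Mf b (1-b) t)⁻¹ by
      rw [Mf_inv ht, show -(1-b) = b-1 by ring]]
    exact inv_anti₀ (Mf_pos ht _ _) g1
  have hb1 : (0:ℝ) < b + 1 := by linarith
  have habs : |b / ((b+1) * Real.log t * Df b t)|
      = (b/(b+1)) * (Real.log t * Df b t)⁻¹ := by
    rw [abs_of_pos (div_pos hb (by positivity)),
      show (b+1) * Real.log t * Df b t = (b+1) * (Real.log t * Df b t) by ring,
      div_eq_mul_inv, mul_inv, ← mul_assoc, ← div_eq_mul_inv]
    ring
  rw [habs]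
  exact mul_le_mul_of_nonneg_left g2 (le_of_lt (div_pos hb hb1))

noncomputable def phi (b t : ℝ) : ℝ := t ^ (1+b) / Real.log t ^ b
noncomputable def Ef (b t : ℝ) : ℂ := Complex.exp (Complex.I * ((phi b t : ℝ) : ℂ))
noncomputable def Gf (b t : ℝ) : ℂ :=
  Ef b t * (-Complex.I * (((Df b t)⁻¹ : ℝ) : ℂ) - ((hf b t : ℝ) : ℂ))

lemma phi_eq_Mf {b t : ℝ} (ht : 1 < t) : phi b t = Mf (1+b) (-b) t := by
  unfold phi Mf
  rw [Real.rpow_neg (Real.log_nonneg ht.le), div_eq_mul_inv]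

lemma hasDerivAt_phi (b : ℝ) {t : ℝ} (ht : 1 < t) :
    HasDerivAt (phi b) (Df b t) t := by
  have h : HasDerivAt (Mf (1+b) (-b)) (Df b t) t := by
    have := hasDerivAt_Mf (1+b) (-b) ht
    rw [show (1+b-1 : ℝ) = b by ring] at this
    convert this using 1
    unfold Df; ring
  apply h.congr_of_eventuallyEq
  filter_upwards [Ioi_mem_nhds ht] with s hs
  exact phi_eq_Mf hs

lemma hasDerivAt_Ef (b : ℝ) {t : ℝ} (ht : 1 < t) :
    HasDerivAt (Ef b) (Ef b t * (Complex.I * ((Df b t : ℝ) : ℂ))) t := by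
  have h1 : HasDerivAt (fun s => ((phi b s : ℝ) : ℂ)) ((Df b t : ℝ) : ℂ) t :=
    (hasDerivAt_phi b ht).ofReal_comp
  exact (h1.const_mul Complex.I).cexp

lemma norm_Ef (b t : ℝ) : ‖Ef b t‖ = 1 := by
  unfold Ef
  rw [mul_comm, Complex.norm_exp_ofReal_mul_I]

lemma hasDerivAt_u (b : ℝ) {t : ℝ} (ht : 1 < t) (hD : Df b t ≠ 0) :
    HasDerivAt (fun s => (Df b s)⁻¹) (-Df1 b t / (Df b t)^2) t :=
  (hasDerivAt_Df b ht).inv hD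

lemma hasDerivAt_hf (b : ℝ) {t : ℝ} (ht : 1 < t) (hD : Df b t ≠ 0) :
    HasDerivAt (hf b) (hf1 b t) t := by
  have h := (hasDerivAt_Df1 b ht).div ((hasDerivAt_Df b ht).pow 3)
    (pow_ne_zero 3 hD)
  refine h.congr_deriv (Eq.symm ?_)
  simp only [Pi.pow_apply]
  unfold hf1
  field_simp
  ring

lemma hasDerivAt_Gf {b t : ℝ} (hb : 0 < b) (ht : 1 < t) (hL : 1 ≤ Real.log t) :
    HasDerivAt (Gf b) (Ef b t * (1 - ((hf1 b t : ℝ) : ℂ))) t := by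
  have hD := (Df_pos hb ht hL).ne'
  have hu : HasDerivAt (fun s => (((Df b s)⁻¹ : ℝ) : ℂ))
      ((((-Df1 b t / (Df b t)^2) : ℝ) : ℂ)) t := (hasDerivAt_u b ht hD).ofReal_comp
  have hh : HasDerivAt (fun s => ((hf b s : ℝ) : ℂ)) ((hf1 b t : ℝ) : ℂ) t :=
    (hasDerivAt_hf b ht hD).ofReal_comp
  have hinner := (hu.const_mul (-Complex.I)).sub hh
  have := (hasDerivAt_Ef b ht).mul hinner
  refine this.congr_deriv (Eq.symm ?_)
  have hDC : ((Df b t : ℝ) : ℂ) ≠ 0 := Complex.ofReal_ne_zero.mpr hD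
  simp only [Pi.sub_apply]
  unfold hf
  push_cast
  field_simp
  ring_nf
  simp [Complex.I_sq]

lemma continuousAt_Mf (p q : ℝ) {t : ℝ} (ht : 1 < t) : ContinuousAt (Mf p q) t :=
  (hasDerivAt_Mf p q ht).continuousAt

lemma continuousAt_Efhf1 {b t : ℝ} (hb : 0 < b) (ht : 1 < t) (hL : 1 ≤ Real.log t) :
    ContinuousAt (fun s => Ef b s * ((hf1 b s : ℝ) : ℂ)) t := by
  have hD := (Df_pos hb ht hL).ne'
  have cDf : ContinuousAt (Df b) t := (hasDerivAt_Df b ht).continuousAt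
  have cDf1 : ContinuousAt (Df1 b) t := (hasDerivAt_Df1 b ht).continuousAt
  have cDf2 : ContinuousAt (Df2 b) t := by
    have c1 := continuousAt_Mf (b-2) (-b) ht
    have c2 := continuousAt_Mf (b-2) (-b-1) ht
    have c3 := continuousAt_Mf (b-2) (-b-2) ht
    have c4 := continuousAt_Mf (b-2) (-b-3) ht
    unfold Df2
    fun_prop
  have chf1 : ContinuousAt (hf1 b) t := by
    unfold hf1
    exact ((cDf2.mul cDf).sub ((cDf1.pow 2).const_mul 3)).div (cDf.pow 4)
      (pow_ne_zero 4 hD)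
  have cEf : ContinuousAt (Ef b) t := (hasDerivAt_Ef b ht).continuousAt
  exact cEf.mul (Complex.continuous_ofReal.continuousAt.comp chf1)

lemma log_ge_one {t : ℝ} (ht : Real.exp 1 ≤ t) : 1 ≤ Real.log t := by
  have := Real.log_le_log (Real.exp_pos 1) ht
  rwa [Real.log_exp] at this

lemma one_lt_of_exp_le {t : ℝ} (ht : Real.exp 1 ≤ t) : 1 < t :=
  lt_of_lt_of_le (by nlinarith [Real.exp_one_gt_d9]) ht

lemma ftc {b : ℝ} (hb : 0 < b) {x : ℝ} (hx : Real.exp 1 ≤ x) :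
    ∫ t in (Real.exp 1)..x, (Ef b t - Ef b t * ((hf1 b t : ℝ) : ℂ))
      = Gf b x - Gf b (Real.exp 1) := by
  have he : (1:ℝ) < Real.exp 1 := one_lt_of_exp_le le_rfl
  apply intervalIntegral.integral_eq_sub_of_hasDerivAt
  · intro t htmem
    rw [uIcc_of_le hx] at htmem
    have ht1 : 1 < t := lt_of_lt_of_le he htmem.1
    have hL : 1 ≤ Real.log t := log_ge_one htmem.1
    have := hasDerivAt_Gf hb ht1 hL
    refine this.congr_deriv (Eq.symm ?_)
    ring
  · apply ContinuousOn.intervalIntegrable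
    intro t htmem
    rw [uIcc_of_le hx] at htmem
    have ht1 : 1 < t := lt_of_lt_of_le he htmem.1
    have hL : 1 ≤ Real.log t := log_ge_one htmem.1
    exact (((hasDerivAt_Ef b ht1).continuousAt).sub
      (continuousAt_Efhf1 hb ht1 hL)).continuousWithinAt

lemma z_eq (u h m c : ℝ) (hc : c ≠ 0) :
    -Complex.I*(u:ℂ) - (h:ℂ) - (m:ℂ)/(Complex.I*(c:ℂ))
      = -Complex.I*(((u - m/c : ℝ)):ℂ) - (h:ℂ) := by
  have hcc : (c:ℂ) ≠ 0 := Complex.ofReal_ne_zero.mpr hc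
  push_cast
  field_simp
  ring_nf
  simp [Complex.I_sq]
  ring

lemma Mf_le_err {b t : ℝ} (hb : 0 < b) (ht : 1 < t) :
    Mf (-1-2*b) (2*b) t ≤ Mf (-b) (b-1) t := by
  have e : Mf (-1-2*b) (2*b) t = Mf (-b) (b-1) t * Mf (-(b+1)) (b+1) t := by
    rw [Mf_mul ht]
    congr 1 <;> ring
  rw [e]
  exact mul_le_of_le_one_right (Mf_pos ht _ _).le (Mf_neg_le_one ht (by linarith))

lemma Mf_tail {b t : ℝ} (hb : 0 < b) (ht : 1 < t)
    (hlog : Real.log t ^ (2*b) ≤ t ^ ((1+b)/2)) :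
    Mf (-2-2*b) (2*b) t ≤ t ^ (-1-(1+3*b)/2) := by
  have ht0 : (0:ℝ) < t := lt_trans one_pos ht
  unfold Mf
  calc t ^ (-2-2*b) * Real.log t ^ (2*b) ≤ t ^ (-2-2*b) * t ^ ((1+b)/2) :=
        mul_le_mul_of_nonneg_left hlog (Real.rpow_nonneg ht0.le _)
    _ = t ^ (-1-(1+3*b)/2) := by
        rw [← Real.rpow_add ht0]
        congr 1
        ring

/-- Asymptotics of `∫₀ˣ τ(t) dt` for the extremal example
`τ(t) = exp(i t^{1+1/κ}/(log t)^{1/κ})` (for `t ≥ e`, `0` otherwise) of the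
quantified Ingham–Karamata theorem. -/
theorem stmt_12 (κ : ℝ) (hκ : 0 < κ) :
    ∃ c : ℂ, ∃ K x₀ : ℝ, 0 < K ∧ 0 < x₀ ∧ ∀ x : ℝ, x₀ ≤ x →
      ‖(∫ t in (0:ℝ)..x, if t < Real.exp 1 then (0:ℂ) else
            Complex.exp (Complex.I * (↑(t ^ (1 + 1/κ) / Real.log t ^ (1/κ)) : ℂ))) -
          c -
          Complex.exp (Complex.I * (↑(x * (x / Real.log x) ^ (1/κ)) : ℂ)) /
              (Complex.I * (1 + 1/(κ:ℂ))) *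
            (↑((Real.log x / x) ^ (1/κ)) : ℂ)‖
        ≤ K * (Real.log x ^ (1/κ - 1) / x ^ (1/κ)) := by
  set b : ℝ := 1/κ with hbdef
  have hb : 0 < b := by positivity
  set qq : ℝ := (1+3*b)/2 with hqqdef
  have hqq : 0 < qq := by positivity
  set τ : ℝ → ℂ := fun t => if t < Real.exp 1 then (0:ℂ) else
    Complex.exp (Complex.I * ((t ^ (1 + b) / Real.log t ^ b : ℝ) : ℂ)) with hτdef
  set EH : ℝ → ℂ := fun t => Ef b t * ((hf1 b t : ℝ) : ℂ) with hEHdef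
  have hC1 : 0 < C1 b := by unfold C1; nlinarith
  have hC2 : 0 < C2 b := by unfold C2; nlinarith
  have hC4 : 0 < C4 b := by unfold C4; nlinarith
  -- eventual bounds
  have ev1 : ∀ᶠ t in atTop, Real.log t ^ (2*b) ≤ t ^ ((1+b)/2) := by
    have h := (isLittleO_log_rpow_rpow_atTop (2*b)
      (show (0:ℝ) < (1+b)/2 by linarith)).def one_pos
    filter_upwards [h, eventually_gt_atTop (1:ℝ)] with t h1 h2
    have hL0 : 0 ≤ Real.log t := Real.log_nonneg h2.le
    rw [Real.norm_eq_abs, Real.norm_eq_abs, abs_of_nonneg (Real.rpow_nonneg hL0 _),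
      abs_of_nonneg (Real.rpow_nonneg (by linarith) _), one_mul] at h1
    exact h1
  have ev2 : ∀ᶠ t in atTop, Real.log t ≤ t ^ ((1+b)/2) := by
    have h := (isLittleO_log_rpow_atTop
      (show (0:ℝ) < (1+b)/2 by linarith)).def one_pos
    filter_upwards [h, eventually_gt_atTop (1:ℝ)] with t h1 h2
    have hL0 : 0 ≤ Real.log t := Real.log_nonneg h2.le
    rw [Real.norm_eq_abs, Real.norm_eq_abs, abs_of_nonneg hL0,
      abs_of_nonneg (Real.rpow_nonneg (by linarith) _), one_mul] at h1
    exact h1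
  obtain ⟨T, hT⟩ := eventually_atTop.mp (ev1.and ev2)
  set X₀ : ℝ := max T (max (Real.exp 1) 3) with hX₀def
  have hX₀e : Real.exp 1 ≤ X₀ := le_trans (le_max_left _ _) (le_max_right _ _)
  have hX₀3 : (3:ℝ) ≤ X₀ := le_trans (le_max_right _ _) (le_max_right _ _)
  have hX₀T : T ≤ X₀ := le_max_left _ _
  have hX₀pos : (0:ℝ) < X₀ := by linarith
  -- pointwise tail bound
  have key_pt : ∀ t : ℝ, X₀ ≤ t → ‖EH t‖ ≤ C4 b * t ^ (-1-qq) := by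
    intro t ht
    have ht1 : (1:ℝ) < t := lt_of_lt_of_le (by norm_num) (le_trans hX₀3 ht)
    have hL : 1 ≤ Real.log t := log_ge_one (le_trans hX₀e ht)
    have hTt := hT t (le_trans hX₀T ht)
    rw [hEHdef]
    simp only [norm_mul, norm_Ef, one_mul, Complex.norm_real, Real.norm_eq_abs]
    calc |hf1 b t| ≤ C4 b * Mf (-2-2*b) (2*b) t := hf1_abs hb ht1 hL
      _ ≤ C4 b * t ^ (-1-qq) := by
          rw [hqqdef]
          exact mul_le_mul_of_nonneg_left (Mf_tail hb ht1 hTt.1) hC4.le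
  -- measurability / integrability
  have contEH : ∀ y : ℝ, Real.exp 1 ≤ y → ContinuousOn EH (Ioi y) := by
    intro y hy t ht
    have ht1 : (1:ℝ) < t := lt_trans (one_lt_of_exp_le le_rfl) (lt_of_le_of_lt hy ht)
    have hL : 1 ≤ Real.log t := log_ge_one (le_of_lt (lt_of_le_of_lt hy ht))
    exact (continuousAt_Efhf1 hb ht1 hL).continuousWithinAt
  have int_tail : ∀ y : ℝ, X₀ ≤ y → IntegrableOn EH (Ioi y) := by
    intro y hy
    have hy0 : (0:ℝ) < y := lt_of_lt_of_le hX₀pos hy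
    apply Integrable.mono' (g := fun t => C4 b * t ^ (-1-qq))
    · exact (integrableOn_Ioi_rpow_of_lt (by linarith) hy0).const_mul _
    · exact (contEH y (le_trans hX₀e hy)).aestronglyMeasurable measurableSet_Ioi
    · refine (ae_restrict_iff' measurableSet_Ioi).mpr (ae_of_all _ ?_)
      intro t ht
      exact key_pt t (le_trans hy (le_of_lt ht))
  have int_base : IntegrableOn EH (Ioc (Real.exp 1) X₀) := by
    apply IntegrableOn.mono_set _ Ioc_subset_Icc_self
    apply ContinuousOn.integrableOn_Icc
    intro t ht
    have ht1 : (1:ℝ) < t := lt_of_lt_of_le (one_lt_of_exp_le le_rfl) ht.1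
    have hL : 1 ≤ Real.log t := log_ge_one ht.1
    exact (continuousAt_Efhf1 hb ht1 hL).continuousWithinAt
  have int_Ioi_e : IntegrableOn EH (Ioi (Real.exp 1)) := by
    rw [← Ioc_union_Ioi_eq_Ioi hX₀e]
    exact int_base.union (int_tail X₀ le_rfl)
  set J : ℂ := ∫ t in Ioi (Real.exp 1), EH t with hJdef
  refine ⟨J - Gf b (Real.exp 1), b/(b+1) + C1 b + C4 b / qq, X₀,
    by positivity, hX₀pos, ?_⟩
  intro x hx
  have hex : Real.exp 1 ≤ x := le_trans hX₀e hx
  have hx1 : (1:ℝ) < x := one_lt_of_exp_le hex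
  have hx0 : (0:ℝ) < x := lt_trans one_pos hx1
  have hL : 1 ≤ Real.log x := log_ge_one hex
  have hL0 : (0:ℝ) < Real.log x := lt_of_lt_of_le one_pos hL
  -- interval integrability on [e,x]
  have contEf : ContinuousOn (Ef b) (uIcc (Real.exp 1) x) := by
    intro t ht
    rw [uIcc_of_le hex] at ht
    exact ((hasDerivAt_Ef b (lt_of_lt_of_le (one_lt_of_exp_le le_rfl)
      ht.1)).continuousAt).continuousWithinAt
  have iiEf : IntervalIntegrable (Ef b) volume (Real.exp 1) x :=
    contEf.intervalIntegrable
  have iiEH : IntervalIntegrable EH volume (Real.exp 1) x := by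
    apply ContinuousOn.intervalIntegrable
    intro t ht
    rw [uIcc_of_le hex] at ht
    have ht1 : (1:ℝ) < t := lt_of_lt_of_le (one_lt_of_exp_le le_rfl) ht.1
    exact (continuousAt_Efhf1 hb ht1 (log_ge_one ht.1)).continuousWithinAt
  have hftc := ftc hb hex
  have hsub : ∫ t in (Real.exp 1)..x, (Ef b t - EH t)
      = (∫ t in (Real.exp 1)..x, Ef b t) - ∫ t in (Real.exp 1)..x, EH t :=
    intervalIntegral.integral_sub iiEf iiEH
  have hEf_val : ∫ t in (Real.exp 1)..x, Ef b t
      = Gf b x - Gf b (Real.exp 1) + ∫ t in (Real.exp 1)..x, EH t := by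
    rw [hsub] at hftc
    linear_combination hftc
  have hsplitu : ∫ t in Ioc (Real.exp 1) x, EH t = J - ∫ t in Ioi x, EH t := by
    have hu := setIntegral_union (Ioc_disjoint_Ioi (le_refl x)) measurableSet_Ioi
      (int_Ioi_e.mono_set Ioc_subset_Ioi_self) (int_tail x hx)
    rw [Ioc_union_Ioi_eq_Ioi hex] at hu
    rw [hJdef, hu]
    ring
  have hEH_ioc : ∫ t in (Real.exp 1)..x, EH t = ∫ t in Ioc (Real.exp 1) x, EH t :=
    intervalIntegral.integral_of_le hex
  -- τ pieces
  have haene : ∀ᵐ t : ℝ, t ≠ Real.exp 1 := by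
    rw [MeasureTheory.ae_iff]
    have hset : {a : ℝ | ¬ a ≠ Real.exp 1} = {Real.exp 1} := by ext a; simp
    rw [hset]
    exact Real.volume_singleton
  have hτ0int : IntervalIntegrable τ volume 0 (Real.exp 1) := by
    rw [intervalIntegrable_iff_integrableOn_Ioc_of_le (Real.exp_pos 1).le]
    apply (integrable_zero _ _ _).congr
    filter_upwards [ae_restrict_mem measurableSet_Ioc, ae_restrict_of_ae haene]
      with t htm htn
    rw [hτdef]
    exact (if_pos (lt_of_le_of_ne htm.2 htn)).symm
  have hτ0 : ∫ t in (0:ℝ)..(Real.exp 1), τ t = 0 := by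
    rw [intervalIntegral.integral_of_le (Real.exp_pos 1).le]
    apply MeasureTheory.integral_eq_zero_of_ae
    filter_upwards [ae_restrict_mem measurableSet_Ioc, ae_restrict_of_ae haene]
      with t htm htn
    rw [hτdef]
    exact if_pos (lt_of_le_of_ne htm.2 htn)
  have hτEf : EqOn (Ef b) τ (Ioc (Real.exp 1) x) := by
    intro t ht
    rw [hτdef]
    simp only
    rw [if_neg (not_lt.mpr (le_of_lt ht.1))]
    rfl
  have hτex_int : IntervalIntegrable τ volume (Real.exp 1) x := by
    rw [intervalIntegrable_iff_integrableOn_Ioc_of_le hex]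
    exact ((intervalIntegrable_iff_integrableOn_Ioc_of_le hex).mp iiEf).congr_fun
      hτEf measurableSet_Ioc
  have hτex : ∫ t in (Real.exp 1)..x, τ t = ∫ t in (Real.exp 1)..x, Ef b t := by
    apply intervalIntegral.integral_congr
    intro t ht
    rw [uIcc_of_le hex] at ht
    rw [hτdef]
    simp only
    rw [if_neg (not_lt.mpr ht.1)]
    rfl
  have hFval : ∫ t in (0:ℝ)..x, τ t
      = Gf b x - Gf b (Real.exp 1) + (J - ∫ t in Ioi x, EH t) := by
    rw [← intervalIntegral.integral_add_adjacent_intervals hτ0int hτex_int, hτ0,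
      zero_add, hτex, hEf_val, hEH_ioc, hsplitu]
  -- Main term rewrite
  have hphase : x * (x / Real.log x) ^ b = phi b x := by
    unfold phi
    rw [Real.div_rpow hx0.le (Real.log_nonneg hx1.le), Real.rpow_add hx0,
      Real.rpow_one]
    ring
  have hm : (Real.log x / x) ^ b = Mf (-b) b x := by
    unfold Mf
    rw [Real.div_rpow (Real.log_nonneg hx1.le) hx0.le, Real.rpow_neg hx0.le]
    ring
  have hac : (1:ℂ) + 1/(κ:ℂ) = (((b+1:ℝ)) : ℂ) := by
    rw [hbdef]
    push_cast
    ring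
  have hMain : Complex.exp (Complex.I * ((x * (x / Real.log x) ^ b : ℝ) : ℂ)) /
        (Complex.I * (1 + 1/(κ:ℂ))) * (((Real.log x / x) ^ b : ℝ) : ℂ)
      = Ef b x / (Complex.I * (((b+1 : ℝ)) : ℂ)) * ((Mf (-b) b x : ℝ) : ℂ) := by
    rw [hphase, hm, hac]
    rfl
  -- G - Main bound
  have hGM : ‖Gf b x - Ef b x / (Complex.I * (((b+1:ℝ)) : ℂ)) * ((Mf (-b) b x : ℝ) : ℂ)‖
      ≤ (b/(b+1) + C1 b) * Mf (-b) (b-1) x := by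
    have hfactor : Gf b x - Ef b x / (Complex.I * ((b+1:ℝ):ℂ)) * ((Mf (-b) b x : ℝ):ℂ)
        = Ef b x * (-Complex.I*(((Df b x)⁻¹ : ℝ):ℂ) - ((hf b x : ℝ):ℂ)
            - ((Mf (-b) b x : ℝ):ℂ)/(Complex.I * ((b+1:ℝ):ℂ))) := by
      unfold Gf
      ring
    rw [hfactor, z_eq _ _ _ (b+1) (by positivity), norm_mul, norm_Ef, one_mul]
    have h1 : ‖-Complex.I*((((Df b x)⁻¹ - Mf (-b) b x/(b+1) : ℝ)):ℂ) - ((hf b x:ℝ):ℂ)‖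
        ≤ |(Df b x)⁻¹ - Mf (-b) b x/(b+1)| + |hf b x| := by
      refine (norm_sub_le _ _).trans ?_
      rw [norm_mul, norm_neg, Complex.norm_I, one_mul, Complex.norm_real,
        Complex.norm_real, Real.norm_eq_abs, Real.norm_eq_abs]
    refine h1.trans ?_
    have h2 := udiff_abs hb hx1 hL
    have h3 := (hf_abs hb hx1 hL).trans
      (mul_le_mul_of_nonneg_left (Mf_le_err hb hx1) hC1.le)
    rw [add_mul]
    exact add_le_add h2 h3
  -- tail bound
  have hTails : ‖∫ t in Ioi x, EH t‖ ≤ (C4 b / qq) * Mf (-b) (b-1) x := by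
    have hgint : Integrable (fun t => C4 b * t ^ (-1-qq)) (volume.restrict (Ioi x)) :=
      (integrableOn_Ioi_rpow_of_lt (by linarith) hx0).const_mul _
    have hbound := MeasureTheory.norm_integral_le_of_norm_le hgint
      ((ae_restrict_iff' measurableSet_Ioi).mpr
        (ae_of_all _ fun t ht => key_pt t (le_trans hx (le_of_lt ht))))
    have hval : ∫ t in Ioi x, C4 b * t ^ (-1-qq) = C4 b * (x ^ (-qq) / qq) := by
      rw [MeasureTheory.integral_const_mul, integral_Ioi_rpow_of_lt (by linarith) hx0,
        show (-1-qq+1 : ℝ) = -qq by ring]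
      rw [div_neg, neg_div, neg_neg]
    refine hbound.trans ?_
    rw [hval]
    have hxq : x ^ (-qq) ≤ Mf (-b) (b-1) x := by
      have hsplit2 : x ^ (-qq : ℝ) = x ^ (-b : ℝ) * x ^ (-(1+b)/2 : ℝ) := by
        rw [← Real.rpow_add hx0]
        congr 1
        rw [hqqdef]
        ring
      have hLb : Real.log x ^ (1-b) ≤ x ^ ((1+b)/2) := by
        calc Real.log x ^ (1-b) ≤ Real.log x ^ (1:ℝ) :=
              Real.rpow_le_rpow_of_exponent_le hL (by linarith)
          _ = Real.log x := Real.rpow_one _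
          _ ≤ x ^ ((1+b)/2) := (hT x (le_trans hX₀T hx)).2
      have h5 : x ^ (-(1+b)/2 : ℝ) ≤ Real.log x ^ (b-1) := by
        rw [show (-(1+b)/2 : ℝ) = -((1+b)/2) by ring, Real.rpow_neg hx0.le,
          show (b-1 : ℝ) = -(1-b) by ring, Real.rpow_neg (Real.log_nonneg hx1.le)]
        exact inv_anti₀ (Real.rpow_pos_of_pos hL0 _) hLb
      rw [hsplit2]
      unfold Mf
      exact mul_le_mul_of_nonneg_left h5 (Real.rpow_nonneg hx0.le _)
    calc C4 b * (x ^ (-qq) / qq) = (C4 b / qq) * x ^ (-qq) := by ring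
      _ ≤ (C4 b / qq) * Mf (-b) (b-1) x :=
          mul_le_mul_of_nonneg_left hxq (by positivity)
  -- final assembly
  have herr : Mf (-b) (b-1) x = Real.log x ^ (b-1) / x ^ b := by
    unfold Mf
    rw [Real.rpow_neg hx0.le]
    ring
  have hdecomp : (∫ t in (0:ℝ)..x, τ t) - (J - Gf b (Real.exp 1)) -
      Ef b x / (Complex.I * (((b+1:ℝ)) : ℂ)) * ((Mf (-b) b x : ℝ) : ℂ)
      = (Gf b x - Ef b x / (Complex.I * (((b+1:ℝ)) : ℂ)) * ((Mf (-b) b x : ℝ) : ℂ))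
        - ∫ t in Ioi x, EH t := by
    rw [hFval]
    ring
  rw [hMain, hdecomp]
  refine (norm_sub_le _ _).trans ?_
  calc ‖Gf b x - Ef b x / (Complex.I * (((b+1:ℝ)) : ℂ)) * ((Mf (-b) b x : ℝ) : ℂ)‖
        + ‖∫ t in Ioi x, EH t‖
      ≤ (b/(b+1) + C1 b) * Mf (-b) (b-1) x + (C4 b / qq) * Mf (-b) (b-1) x :=
        add_le_add hGM hTails
    _ = (b/(b+1) + C1 b + C4 b / qq) * (Real.log x ^ (b-1) / x ^ b) := by
        rw [← herr]
        ring
end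

section
/- Let α > 1 and define S(x) = ∫₁^x (1 + cos((log u)^α)) du for x ≥ 1. Then, as x → ∞, S(x) = x + x sin((log x)^α) / ( α (log x)^{α−1} ) + O( x / (log x)^{2(α−1)} ). -/
open MeasureTheory Set

noncomputable def Gfun (α u : ℝ) : ℝ :=
  u * Real.sin (Real.log u ^ α) / (α * Real.log u ^ (α - 1))
    + u * Real.cos (Real.log u ^ α) / (α ^ 2 * (Real.log u ^ (α - 1)) ^ 2)
    - (α - 1) * (u * Real.cos (Real.log u ^ α)) /
        (α ^ 2 * (Real.log u ^ (α - 1)) ^ 2 * Real.log u)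

noncomputable def Efun (α u : ℝ) : ℝ :=
  Real.cos (Real.log u ^ α) *
    ((1 - (3 * α - 3) / Real.log u + (α - 1) * (2 * α - 1) / Real.log u ^ 2) /
      (α ^ 2 * (Real.log u ^ (α - 1)) ^ 2))

lemma hasDerivAt_G (α : ℝ) (hα : 1 < α) {u : ℝ} (hu0 : 0 < u) (hu : 1 ≤ Real.log u) :
    HasDerivAt (Gfun α) (Real.cos (Real.log u ^ α) + Efun α u) u := by
  have hL0 : (0:ℝ) < Real.log u := lt_of_lt_of_le one_pos hu
  have hLne : Real.log u ≠ 0 := hL0.ne'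
  have hα0 : α ≠ 0 := by linarith
  have ha0 : Real.log u ^ (α - 1) ≠ 0 := (Real.rpow_pos_of_pos hL0 _).ne'
  have hlog : HasDerivAt Real.log u⁻¹ u := Real.hasDerivAt_log hu0.ne'
  have ha : HasDerivAt (fun v => Real.log v ^ (α - 1))
      (u⁻¹ * (α - 1) * Real.log u ^ (α - 1 - 1)) u := hlog.rpow_const (Or.inl hLne)
  have hA : HasDerivAt (fun v => Real.log v ^ α)
      (u⁻¹ * α * Real.log u ^ (α - 1)) u := hlog.rpow_const (Or.inl hLne)
  have hs : HasDerivAt (fun v => Real.sin (Real.log v ^ α))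
      (Real.cos (Real.log u ^ α) * (u⁻¹ * α * Real.log u ^ (α - 1))) u := hA.sin
  have hc : HasDerivAt (fun v => Real.cos (Real.log v ^ α))
      (-Real.sin (Real.log u ^ α) * (u⁻¹ * α * Real.log u ^ (α - 1))) u := hA.cos
  have hid : HasDerivAt (fun v : ℝ => v) 1 u := hasDerivAt_id u
  have hden1 : α * Real.log u ^ (α - 1) ≠ 0 := mul_ne_zero hα0 ha0
  have hden2 : α ^ 2 * (Real.log u ^ (α - 1)) ^ 2 ≠ 0 := by positivity
  have hden3 : α ^ 2 * (Real.log u ^ (α - 1)) ^ 2 * Real.log u ≠ 0 := mul_ne_zero hden2 hLne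
  have h1 := (hid.mul hs).div (ha.const_mul α) hden1
  have h2 := (hid.mul hc).div ((ha.pow 2).const_mul (α ^ 2)) hden2
  have h3 := ((hid.mul hc).const_mul (α - 1)).div
      ((((ha.pow 2).const_mul (α ^ 2)).mul hlog)) hden3
  have hG := (h1.add h2).sub h3
  refine hG.congr_deriv ?_
  simp only [Pi.mul_apply, Pi.pow_apply]
  symm
  have hsub : Real.log u ^ (α - 1 - 1) = Real.log u ^ (α - 1) / Real.log u := by
    rw [Real.rpow_sub hL0, Real.rpow_one]
  rw [Efun, hsub]
  have hune : u ≠ 0 := hu0.ne'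
  set l := Real.log u
  set a := l ^ (α - 1)
  set s := Real.sin (l ^ α)
  set c := Real.cos (l ^ α)
  field_simp
  ring

lemma sq_rpow (α : ℝ) {l : ℝ} (hl : 0 ≤ l) : (l ^ (α - 1)) ^ 2 = l ^ (2 * (α - 1)) := by
  rw [show 2 * (α - 1) = (α - 1) * 2 by ring, Real.rpow_mul hl, Real.rpow_two]

lemma E_bound (α : ℝ) (hα : 1 < α) {u : ℝ} (hu : 1 ≤ Real.log u) :
    |Efun α u| ≤ (1 + 3 * (α - 1) + (α - 1) * (2 * α - 1)) / Real.log u ^ (2 * (α - 1)) := by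
  set l := Real.log u with hl
  have hl0 : (0:ℝ) < l := lt_of_lt_of_le one_pos hu
  have hP0 : (0:ℝ) < l ^ (2 * (α - 1)) := Real.rpow_pos_of_pos hl0 _
  have ha0 : (0:ℝ) < l ^ (α - 1) := Real.rpow_pos_of_pos hl0 _
  have hα1 : (1:ℝ) ≤ α ^ 2 := by nlinarith
  have hN : |1 - (3 * α - 3) / l + (α - 1) * (2 * α - 1) / l ^ 2|
      ≤ 1 + 3 * (α - 1) + (α - 1) * (2 * α - 1) := by
    have h1 : (3 * α - 3) / l ≤ 3 * α - 3 := by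
      apply div_le_self (by linarith) hu
    have h1' : 0 ≤ (3 * α - 3) / l := div_nonneg (by linarith) hl0.le
    have h2 : (α - 1) * (2 * α - 1) / l ^ 2 ≤ (α - 1) * (2 * α - 1) := by
      apply div_le_self (by nlinarith) (by nlinarith)
    have h2' : 0 ≤ (α - 1) * (2 * α - 1) / l ^ 2 := by
      apply div_nonneg (by nlinarith) (by positivity)
    rw [abs_le]
    constructor <;> nlinarith
  rw [Efun, abs_mul, abs_div]
  have hden : |α ^ 2 * (l ^ (α - 1)) ^ 2| = α ^ 2 * (l ^ (α - 1)) ^ 2 :=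
    abs_of_pos (by positivity)
  rw [hden]
  calc |Real.cos (l ^ α)| * (|1 - (3 * α - 3) / l + (α - 1) * (2 * α - 1) / l ^ 2|
          / (α ^ 2 * (l ^ (α - 1)) ^ 2))
      ≤ 1 * ((1 + 3 * (α - 1) + (α - 1) * (2 * α - 1)) / (1 * (l ^ (α - 1)) ^ 2)) := by
        apply mul_le_mul (Real.abs_cos_le_one _) ?_ (by positivity) zero_le_one
        apply div_le_div₀ (by nlinarith) hN (by positivity)
        apply mul_le_mul_of_nonneg_right hα1 (by positivity)
    _ = (1 + 3 * (α - 1) + (α - 1) * (2 * α - 1)) / l ^ (2 * (α - 1)) := by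
        rw [one_mul, one_mul, sq_rpow α hl0.le]

lemma contOn_cosA (α : ℝ) (hα : 0 < α) {s : Set ℝ} (hs : ∀ u ∈ s, (1:ℝ) ≤ u) :
    ContinuousOn (fun u => Real.cos (Real.log u ^ α)) s := by
  intro u hu
  have h1 : (1:ℝ) ≤ u := hs u hu
  have h := (Real.continuousAt_log (by linarith : u ≠ 0)).rpow_const (Or.inr hα.le)
  exact (Real.continuous_cos.continuousAt.comp h).continuousWithinAt

lemma contOn_E (α : ℝ) (hα : 1 < α) {s : Set ℝ} (hs : ∀ u ∈ s, Real.exp 1 ≤ u) :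
    ContinuousOn (Efun α) s := by
  intro u hu
  have he : Real.exp 1 ≤ u := hs u hu
  have hu0 : (0:ℝ) < u := lt_of_lt_of_le (Real.exp_pos 1) he
  have hlog : 1 ≤ Real.log u := (Real.le_log_iff_exp_le hu0).mpr he
  have hL0 : Real.log u ≠ 0 := ne_of_gt (lt_of_lt_of_le one_pos hlog)
  have hα0 : (0:ℝ) < α := by linarith
  have hct : ContinuousAt Real.log u := Real.continuousAt_log hu0.ne'
  have hA : ContinuousAt (fun v => Real.cos (Real.log v ^ α)) u :=
    Real.continuous_cos.continuousAt.comp (hct.rpow_const (Or.inl hL0))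
  have ha : ContinuousAt (fun v => Real.log v ^ (α - 1)) u := hct.rpow_const (Or.inl hL0)
  have hden : α ^ 2 * (Real.log u ^ (α - 1)) ^ 2 ≠ 0 :=
    ne_of_gt (mul_pos (pow_pos hα0 2)
      (pow_pos (Real.rpow_pos_of_pos (lt_of_lt_of_le one_pos hlog) _) 2))
  exact (hA.mul ((((continuousAt_const.sub (continuousAt_const.div hct hL0)).add
      (continuousAt_const.div (hct.pow 2) (pow_ne_zero 2 hL0))).div
      (continuousAt_const.mul (ha.pow 2)) hden))).continuousWithinAt

lemma log_pow_le_sqrt (β x : ℝ) (hβ : 0 < β) (hx : (4 * β) ^ (4 * β) ≤ x)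
    (hx2 : Real.exp 2 ≤ x) : Real.log x ^ β ≤ x ^ (1/2 : ℝ) := by
  have hx0 : (0:ℝ) < x := lt_of_lt_of_le (Real.exp_pos 2) hx2
  have hx1 : (1:ℝ) ≤ x := le_trans (Real.one_le_exp (by norm_num)) hx2
  set ε := 1 / (4 * β) with hεdef
  have hε : (0:ℝ) < ε := by positivity
  have hlog : Real.log x ≤ x ^ ε / ε := by
    have h := Real.log_le_sub_one_of_pos (Real.rpow_pos_of_pos hx0 ε)
    rw [Real.log_rpow hx0] at h
    rw [le_div_iff₀ hε, mul_comm]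
    linarith
  have h2 : Real.log x ^ β ≤ (x ^ ε / ε) ^ β :=
    Real.rpow_le_rpow (Real.log_nonneg hx1) hlog hβ.le
  have h3 : (x ^ ε / ε) ^ β = x ^ (1/4 : ℝ) * (4 * β) ^ β := by
    rw [Real.div_rpow (Real.rpow_nonneg hx0.le ε) hε.le, ← Real.rpow_mul hx0.le,
      show ε * β = 1/4 by rw [hεdef]; field_simp,
      show ε = ((4 * β))⁻¹ by rw [hεdef, one_div],
      Real.inv_rpow (by positivity)]
    field_simp
  have h5 : (4 * β) ^ β ≤ x ^ (1/4 : ℝ) := by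
    have h6 := Real.rpow_le_rpow (Real.rpow_nonneg (by positivity) _) hx
      (by norm_num : (0:ℝ) ≤ 1/4)
    rwa [← Real.rpow_mul (by positivity), show 4 * β * (1/4) = β by ring] at h6
  calc Real.log x ^ β ≤ x ^ (1/4 : ℝ) * (4 * β) ^ β := by rw [← h3]; exact h2
    _ ≤ x ^ (1/4 : ℝ) * x ^ (1/4 : ℝ) :=
        mul_le_mul_of_nonneg_left h5 (Real.rpow_nonneg hx0.le _)
    _ = x ^ (1/2 : ℝ) := by rw [← Real.rpow_add hx0]; norm_num

set_option maxHeartbeats 4000000 in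
/-- Asymptotics of `S(x) = ∫₁ˣ (1 + cos((log u)^α)) du`, the explicit
counterexample to Müger's conjecture. -/
theorem stmt_13 (α : ℝ) (hα : 1 < α) :
    ∃ K x₀ : ℝ, 0 < K ∧ 1 < x₀ ∧ ∀ x : ℝ, x₀ ≤ x →
      |(∫ u in (1:ℝ)..x, (1 + Real.cos (Real.log u ^ α))) - x -
          x * Real.sin (Real.log x ^ α) / (α * Real.log x ^ (α - 1))|
        ≤ K * (x / Real.log x ^ (2 * (α - 1))) := by
  set C₀ : ℝ := 1 + 3 * (α - 1) + (α - 1) * (2 * α - 1) with hC₀def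
  have hC₀ : (0:ℝ) < C₀ := by rw [hC₀def]; nlinarith
  have h2β : (0:ℝ) < 2 * (α - 1) := by linarith
  refine ⟨8 + C₀ + C₀ * (2:ℝ) ^ (2 * (α - 1)),
    max (Real.exp 2) ((4 * (2 * (α - 1))) ^ (4 * (2 * (α - 1))) + 2), ?_, ?_, ?_⟩
  · have := Real.rpow_pos_of_pos (by norm_num : (0:ℝ) < 2) (2 * (α - 1))
    nlinarith
  · have h0 : (0:ℝ) ≤ (4 * (2 * (α - 1))) ^ (4 * (2 * (α - 1))) :=
      Real.rpow_nonneg (by linarith) _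
    have := le_max_right (Real.exp 2) ((4 * (2 * (α - 1))) ^ (4 * (2 * (α - 1))) + 2)
    linarith
  intro x hx
  -- basic facts
  have hx2 : Real.exp 2 ≤ x := le_trans (le_max_left _ _) hx
  have hx4 : (4 * (2 * (α - 1))) ^ (4 * (2 * (α - 1))) ≤ x := by
    have := le_max_right (Real.exp 2) ((4 * (2 * (α - 1))) ^ (4 * (2 * (α - 1))) + 2)
    linarith
  have hx0 : (0:ℝ) < x := lt_of_lt_of_le (Real.exp_pos 2) hx2
  have h1x : (1:ℝ) ≤ x := le_trans (Real.one_le_exp (by norm_num)) hx2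
  have hlx2 : (2:ℝ) ≤ Real.log x := (Real.le_log_iff_exp_le hx0).mpr hx2
  have hlx0 : (0:ℝ) < Real.log x := by linarith
  set P := Real.log x ^ (2 * (α - 1)) with hPdef
  have hP0 : (0:ℝ) < P := Real.rpow_pos_of_pos hlx0 _
  set y := x ^ (1/2 : ℝ) with hydef
  have hP : P ≤ y := log_pow_le_sqrt (2 * (α - 1)) x h2β hx4 hx2
  have hy1 : (1:ℝ) ≤ y := Real.one_le_rpow h1x (by norm_num)
  have he_y : Real.exp 1 ≤ y := by
    have h := Real.rpow_le_rpow (Real.exp_pos 2).le hx2 (by norm_num : (0:ℝ) ≤ 1/2)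
    rwa [Real.rpow_def_of_pos (Real.exp_pos 2), Real.log_exp,
      show (2:ℝ) * (1/2) = 1 by norm_num] at h
  have hyx : y ≤ x := by
    have := Real.rpow_le_rpow_of_exponent_le h1x (by norm_num : (1/2:ℝ) ≤ 1)
    rwa [Real.rpow_one] at this
  have hy0 : (0:ℝ) < y := by linarith
  have hxyy : x = y * y := by rw [hydef, ← Real.rpow_add hx0]; norm_num
  have hex : Real.exp 1 ≤ x := le_trans he_y hyx
  have h1e : (1:ℝ) ≤ Real.exp 1 := Real.one_le_exp zero_le_one
  have he0 : (0:ℝ) < Real.exp 1 := Real.exp_pos 1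
  have hlogy : Real.log y = Real.log x / 2 := by rw [hydef, Real.log_rpow hx0]; ring
  have hly1 : (1:ℝ) ≤ Real.log y := by rw [hlogy]; linarith
  have hα0 : (0:ℝ) < α := by linarith
  -- x / P ≥ y
  have hxP : y ≤ x / P := by
    have h1 : x / y = y := by
      rw [hxyy]; field_simp
    have h2 : x / y ≤ x / P := by gcongr
    linarith
  have hxP0 : (0:ℝ) ≤ x / P := by positivity
  -- integrability
  have hiCos1e : IntervalIntegrable (fun u => Real.cos (Real.log u ^ α)) volume 1 (Real.exp 1) := by
    apply (contOn_cosA α hα0 ?_).intervalIntegrable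
    intro u hu; rw [Set.uIcc_of_le h1e] at hu; exact hu.1
  have hiCosex : IntervalIntegrable (fun u => Real.cos (Real.log u ^ α)) volume (Real.exp 1) x := by
    apply (contOn_cosA α hα0 ?_).intervalIntegrable
    intro u hu; rw [Set.uIcc_of_le hex] at hu; exact le_trans h1e hu.1
  have hiEex : IntervalIntegrable (Efun α) volume (Real.exp 1) x := by
    apply (contOn_E α hα ?_).intervalIntegrable
    intro u hu; rw [Set.uIcc_of_le hex] at hu; exact hu.1
  have hiEey : IntervalIntegrable (Efun α) volume (Real.exp 1) y := by
    apply (contOn_E α hα ?_).intervalIntegrable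
    intro u hu; rw [Set.uIcc_of_le he_y] at hu; exact hu.1
  have hiEyx : IntervalIntegrable (Efun α) volume y x := by
    apply (contOn_E α hα ?_).intervalIntegrable
    intro u hu; rw [Set.uIcc_of_le hyx] at hu; exact le_trans he_y hu.1
  have hiCos1x : IntervalIntegrable (fun u => Real.cos (Real.log u ^ α)) volume 1 x := by
    apply (contOn_cosA α hα0 ?_).intervalIntegrable
    intro u hu; rw [Set.uIcc_of_le h1x] at hu; exact hu.1
  -- FTC
  have hderiv : ∀ u ∈ Set.uIcc (Real.exp 1) x,
      HasDerivAt (Gfun α) (Real.cos (Real.log u ^ α) + Efun α u) u := by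
    intro u hu
    rw [Set.uIcc_of_le hex] at hu
    have hu0 : (0:ℝ) < u := lt_of_lt_of_le he0 hu.1
    exact hasDerivAt_G α hα hu0 ((Real.le_log_iff_exp_le hu0).mpr hu.1)
  have hFTC := intervalIntegral.integral_eq_sub_of_hasDerivAt hderiv (hiCosex.add hiEex)
  have hsum : (∫ u in (Real.exp 1)..x, (Real.cos (Real.log u ^ α) + Efun α u))
      = (∫ u in (Real.exp 1)..x, Real.cos (Real.log u ^ α))
        + ∫ u in (Real.exp 1)..x, Efun α u :=
    intervalIntegral.integral_add hiCosex hiEex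
  have hsplitE : (∫ u in (Real.exp 1)..x, Efun α u)
      = (∫ u in (Real.exp 1)..y, Efun α u) + ∫ u in y..x, Efun α u :=
    (intervalIntegral.integral_add_adjacent_intervals hiEey hiEyx).symm
  have hsplit1 : (∫ u in (1:ℝ)..x, Real.cos (Real.log u ^ α))
      = (∫ u in (1:ℝ)..(Real.exp 1), Real.cos (Real.log u ^ α))
        + ∫ u in (Real.exp 1)..x, Real.cos (Real.log u ^ α) :=
    (intervalIntegral.integral_add_adjacent_intervals hiCos1e hiCosex).symm
  have hcos_ex : (∫ u in (Real.exp 1)..x, Real.cos (Real.log u ^ α))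
      = Gfun α x - Gfun α (Real.exp 1)
        - (∫ u in (Real.exp 1)..y, Efun α u) - ∫ u in y..x, Efun α u := by
    rw [hsum, hsplitE] at hFTC; linarith
  have hEq : (∫ u in (1:ℝ)..x, (1 + Real.cos (Real.log u ^ α)))
      = (x - 1) + ((∫ u in (1:ℝ)..(Real.exp 1), Real.cos (Real.log u ^ α))
        + ∫ u in (Real.exp 1)..x, Real.cos (Real.log u ^ α)) := by
    rw [intervalIntegral.integral_add intervalIntegrable_const hiCos1x,
      intervalIntegral.integral_const, hsplit1]
    simp
  -- the rewrite of the main expression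
  have hrw : (∫ u in (1:ℝ)..x, (1 + Real.cos (Real.log u ^ α))) - x -
        x * Real.sin (Real.log x ^ α) / (α * Real.log x ^ (α - 1))
      = (∫ u in (1:ℝ)..(Real.exp 1), Real.cos (Real.log u ^ α)) - 1
        - Gfun α (Real.exp 1)
        + x * Real.cos (Real.log x ^ α) / (α ^ 2 * (Real.log x ^ (α - 1)) ^ 2)
        - (α - 1) * (x * Real.cos (Real.log x ^ α)) /
            (α ^ 2 * (Real.log x ^ (α - 1)) ^ 2 * Real.log x)
        - (∫ u in (Real.exp 1)..y, Efun α u) - ∫ u in y..x, Efun α u := by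
    rw [hEq, hcos_ex]
    simp only [Gfun]
    ring
  rw [hrw]
  -- bounds on pieces
  have habs_cosx : |Real.cos (Real.log x ^ α)| ≤ 1 := Real.abs_cos_le_one _
  have hsqP : (Real.log x ^ (α - 1)) ^ 2 = P := sq_rpow α hlx0.le
  have hb1 : |∫ u in (1:ℝ)..(Real.exp 1), Real.cos (Real.log u ^ α)| ≤ x / P := by
    have h := intervalIntegral.norm_integral_le_of_norm_le_const
      (C := 1) (f := fun u => Real.cos (Real.log u ^ α)) (a := (1:ℝ)) (b := Real.exp 1)
      (fun u _ => by rw [Real.norm_eq_abs]; exact Real.abs_cos_le_one _)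
    rw [Real.norm_eq_abs] at h
    have : |Real.exp 1 - 1| = Real.exp 1 - 1 := abs_of_nonneg (by linarith)
    calc |∫ u in (1:ℝ)..(Real.exp 1), Real.cos (Real.log u ^ α)|
        ≤ 1 * |Real.exp 1 - 1| := h
      _ ≤ y := by rw [this]; linarith
      _ ≤ x / P := hxP
  have hb2 : (1:ℝ) ≤ x / P := le_trans (le_trans hy1 (le_refl y)) hxP
  have hb3 : |Gfun α (Real.exp 1)| ≤ 3 * (x / P) := by
    have h1 : |Real.exp 1 * Real.sin 1 / α| ≤ Real.exp 1 := by
      rw [abs_div, abs_mul, abs_of_pos he0, abs_of_pos hα0, div_le_iff₀ hα0]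
      calc Real.exp 1 * |Real.sin 1| ≤ Real.exp 1 * 1 :=
            mul_le_mul_of_nonneg_left (Real.abs_sin_le_one 1) he0.le
        _ ≤ Real.exp 1 * α := mul_le_mul_of_nonneg_left (by linarith) he0.le
    have h2 : |Real.exp 1 * Real.cos 1 / α ^ 2| ≤ Real.exp 1 := by
      rw [abs_div, abs_mul, abs_of_pos he0, abs_of_pos (pow_pos hα0 2), div_le_iff₀ (pow_pos hα0 2)]
      calc Real.exp 1 * |Real.cos 1| ≤ Real.exp 1 * 1 :=
            mul_le_mul_of_nonneg_left (Real.abs_cos_le_one 1) he0.le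
        _ ≤ Real.exp 1 * α ^ 2 := mul_le_mul_of_nonneg_left (by nlinarith) he0.le
    have h3 : |(α - 1) * (Real.exp 1 * Real.cos 1) / α ^ 2| ≤ Real.exp 1 := by
      rw [abs_div, abs_mul, abs_mul, abs_of_pos he0, abs_of_pos (by linarith : (0:ℝ) < α - 1),
        abs_of_pos (pow_pos hα0 2), div_le_iff₀ (pow_pos hα0 2)]
      calc (α - 1) * (Real.exp 1 * |Real.cos 1|) ≤ (α - 1) * (Real.exp 1 * 1) := by
            apply mul_le_mul_of_nonneg_left ?_ (by linarith : (0:ℝ) ≤ α - 1)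
            exact mul_le_mul_of_nonneg_left (Real.abs_cos_le_one 1) he0.le
        _ = Real.exp 1 * (α - 1) := by ring
        _ ≤ Real.exp 1 * α ^ 2 := mul_le_mul_of_nonneg_left (by nlinarith) he0.le
    have hGe : Gfun α (Real.exp 1) = Real.exp 1 * Real.sin 1 / α
        + Real.exp 1 * Real.cos 1 / α ^ 2
        - (α - 1) * (Real.exp 1 * Real.cos 1) / α ^ 2 := by
      simp [Gfun, Real.log_exp, Real.one_rpow]
    rw [hGe]
    have htri : |Real.exp 1 * Real.sin 1 / α + Real.exp 1 * Real.cos 1 / α ^ 2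
        - (α - 1) * (Real.exp 1 * Real.cos 1) / α ^ 2|
        ≤ |Real.exp 1 * Real.sin 1 / α| + |Real.exp 1 * Real.cos 1 / α ^ 2|
          + |(α - 1) * (Real.exp 1 * Real.cos 1) / α ^ 2| := by
      calc |Real.exp 1 * Real.sin 1 / α + Real.exp 1 * Real.cos 1 / α ^ 2
          - (α - 1) * (Real.exp 1 * Real.cos 1) / α ^ 2|
          ≤ |Real.exp 1 * Real.sin 1 / α + Real.exp 1 * Real.cos 1 / α ^ 2|
            + |(α - 1) * (Real.exp 1 * Real.cos 1) / α ^ 2| := abs_sub _ _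
        _ ≤ _ := by
            have := abs_add_le (Real.exp 1 * Real.sin 1 / α) (Real.exp 1 * Real.cos 1 / α ^ 2)
            linarith
    have hey3 : Real.exp 1 ≤ x / P := le_trans he_y hxP
    calc |Real.exp 1 * Real.sin 1 / α + Real.exp 1 * Real.cos 1 / α ^ 2
        - (α - 1) * (Real.exp 1 * Real.cos 1) / α ^ 2|
        ≤ 3 * Real.exp 1 := by linarith
      _ ≤ 3 * (x / P) := by linarith
  have hb4 : |x * Real.cos (Real.log x ^ α) / (α ^ 2 * (Real.log x ^ (α - 1)) ^ 2)| ≤ x / P := by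
    rw [hsqP, abs_div, abs_mul, abs_of_pos hx0, abs_of_pos (by positivity : (0:ℝ) < α ^ 2 * P)]
    apply div_le_div₀ (le_of_lt hx0) ?_ hP0 ?_
    · nlinarith
    · nlinarith [sq_nonneg α, hP0, (by nlinarith : (1:ℝ) ≤ α ^ 2)]
  have hb5 : |(α - 1) * (x * Real.cos (Real.log x ^ α)) /
      (α ^ 2 * (Real.log x ^ (α - 1)) ^ 2 * Real.log x)| ≤ x / P := by
    rw [hsqP, abs_div, abs_mul, abs_mul, abs_of_pos hx0,
      abs_of_pos (by linarith : (0:ℝ) < α - 1),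
      abs_of_pos (by positivity : (0:ℝ) < α ^ 2 * P * Real.log x)]
    rw [div_le_div_iff₀ (by positivity) hP0]
    have hc1 : (α - 1) * |Real.cos (Real.log x ^ α)| ≤ α ^ 2 * Real.log x := by
      calc (α - 1) * |Real.cos (Real.log x ^ α)| ≤ (α - 1) * 1 :=
            mul_le_mul_of_nonneg_left habs_cosx (by linarith)
        _ ≤ α ^ 2 * 1 := by nlinarith
        _ ≤ α ^ 2 * Real.log x := by nlinarith [sq_nonneg α]
    calc (α - 1) * (x * |Real.cos (Real.log x ^ α)|) * P
        = (α - 1) * |Real.cos (Real.log x ^ α)| * (x * P) := by ring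
      _ ≤ α ^ 2 * Real.log x * (x * P) := mul_le_mul_of_nonneg_right hc1 (by positivity)
      _ = x * (α ^ 2 * P * Real.log x) := by ring
  have hEbound : ∀ u : ℝ, Real.exp 1 ≤ u → |Efun α u| ≤ C₀ := by
    intro u hu
    have hu0 : (0:ℝ) < u := lt_of_lt_of_le he0 hu
    have hlu : (1:ℝ) ≤ Real.log u := (Real.le_log_iff_exp_le hu0).mpr hu
    have h := E_bound α hα hlu
    have h1 : (1:ℝ) ≤ Real.log u ^ (2 * (α - 1)) := Real.one_le_rpow hlu h2β.le
    calc |Efun α u| ≤ C₀ / Real.log u ^ (2 * (α - 1)) := h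
      _ ≤ C₀ / 1 := by gcongr
      _ = C₀ := div_one _
  have hb6 : |∫ u in (Real.exp 1)..y, Efun α u| ≤ C₀ * (x / P) := by
    have h := intervalIntegral.norm_integral_le_of_norm_le_const (C := C₀)
      (f := Efun α) (a := Real.exp 1) (b := y)
      (fun u hu => by
        rw [Set.uIoc_of_le he_y] at hu
        rw [Real.norm_eq_abs]
        exact hEbound u hu.1.le)
    rw [Real.norm_eq_abs] at h
    have habs : |y - Real.exp 1| = y - Real.exp 1 := abs_of_nonneg (by linarith)
    calc |∫ u in (Real.exp 1)..y, Efun α u| ≤ C₀ * |y - Real.exp 1| := h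
      _ ≤ C₀ * (x / P) := by
          rw [habs]
          apply mul_le_mul_of_nonneg_left ?_ hC₀.le
          linarith
  have hb7 : |∫ u in y..x, Efun α u| ≤ C₀ * (2:ℝ) ^ (2 * (α - 1)) * (x / P) := by
    have h2pow : (0:ℝ) < (2:ℝ) ^ (2 * (α - 1)) := Real.rpow_pos_of_pos (by norm_num) _
    have hhalf : (Real.log x / 2) ^ (2 * (α - 1)) = P / (2:ℝ) ^ (2 * (α - 1)) := by
      rw [Real.div_rpow hlx0.le (by norm_num : (0:ℝ) ≤ 2)]
    have hbd : ∀ u ∈ Set.uIoc y x, ‖Efun α u‖ ≤ C₀ * (2:ℝ) ^ (2 * (α - 1)) / P := by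
      intro u hu
      rw [Set.uIoc_of_le hyx] at hu
      have hyu : y ≤ u := hu.1.le
      have hu0 : (0:ℝ) < u := lt_of_lt_of_le hy0 hyu
      have hlu : (1:ℝ) ≤ Real.log u := le_trans hly1 (Real.log_le_log hy0 hyu)
      have hlu2 : Real.log x / 2 ≤ Real.log u := by
        rw [← hlogy]; exact Real.log_le_log hy0 hyu
      have hmono : (Real.log x / 2) ^ (2 * (α - 1)) ≤ Real.log u ^ (2 * (α - 1)) :=
        Real.rpow_le_rpow (by linarith) hlu2 h2β.le
      have hpos2 : (0:ℝ) < (Real.log x / 2) ^ (2 * (α - 1)) :=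
        Real.rpow_pos_of_pos (by linarith) _
      rw [Real.norm_eq_abs]
      calc |Efun α u| ≤ C₀ / Real.log u ^ (2 * (α - 1)) := E_bound α hα hlu
        _ ≤ C₀ / (Real.log x / 2) ^ (2 * (α - 1)) := by gcongr
        _ = C₀ / (P / (2:ℝ) ^ (2 * (α - 1))) := by rw [hhalf]
        _ = C₀ * (2:ℝ) ^ (2 * (α - 1)) / P := by
            field_simp
    have h := intervalIntegral.norm_integral_le_of_norm_le_const hbd
    rw [Real.norm_eq_abs] at h
    have habs : |x - y| = x - y := abs_of_nonneg (by linarith)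
    calc |∫ u in y..x, Efun α u| ≤ C₀ * (2:ℝ) ^ (2 * (α - 1)) / P * |x - y| := h
      _ ≤ C₀ * (2:ℝ) ^ (2 * (α - 1)) / P * x := by
          rw [habs]
          apply mul_le_mul_of_nonneg_left (by linarith) (by positivity)
      _ = C₀ * (2:ℝ) ^ (2 * (α - 1)) * (x / P) := by ring
  -- final triangle inequality assembly
  set I₁ := ∫ u in (1:ℝ)..(Real.exp 1), Real.cos (Real.log u ^ α)
  set Ge := Gfun α (Real.exp 1)
  set T1 := x * Real.cos (Real.log x ^ α) / (α ^ 2 * (Real.log x ^ (α - 1)) ^ 2)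
  set T2 := (α - 1) * (x * Real.cos (Real.log x ^ α)) /
      (α ^ 2 * (Real.log x ^ (α - 1)) ^ 2 * Real.log x)
  set J1 := ∫ u in (Real.exp 1)..y, Efun α u
  set J2 := ∫ u in y..x, Efun α u
  have htri : |I₁ - 1 - Ge + T1 - T2 - J1 - J2|
      ≤ |I₁| + 1 + |Ge| + |T1| + |T2| + |J1| + |J2| := by
    have a1 := abs_sub (I₁ - 1 - Ge + T1 - T2 - J1) J2
    have a2 := abs_sub (I₁ - 1 - Ge + T1 - T2) J1
    have a3 := abs_sub (I₁ - 1 - Ge + T1) T2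
    have a4 := abs_add_le (I₁ - 1 - Ge) T1
    have a5 := abs_sub (I₁ - 1) Ge
    have a6 := abs_sub I₁ 1
    have : |(1:ℝ)| = 1 := abs_one
    linarith
  calc |I₁ - 1 - Ge + T1 - T2 - J1 - J2|
      ≤ |I₁| + 1 + |Ge| + |T1| + |T2| + |J1| + |J2| := htri
    _ ≤ (x / P) + (x / P) + 3 * (x / P) + (x / P) + (x / P)
        + C₀ * (x / P) + C₀ * (2:ℝ) ^ (2 * (α - 1)) * (x / P) := by
        linarith
    _ ≤ (8 + C₀ + C₀ * (2:ℝ) ^ (2 * (α - 1))) * (x / P) := by nlinarith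
end

section
/- Let α > 1 and define S(x) = ∫₁^x (1 + cos((log u)^α)) du for x ≥ 1, and F_{α,0}(z) = ∫₀^∞ exp(i t^α − i z t) dt for Im z < 0. Then for every s ∈ ℂ with Re s > 1, ∫₁^∞ S(x) x^{−s−1} dx = 1/(s−1) − 1/s + ( F_{α,0}(i(1−s)) + conj( F_{α,0}( i(1 − conj(s)) ) ) ) / (2s), where conj denotes complex conjugation; note Im(i(1−s)) = 1 − Re s < 0, so both Fourier–Laplace transforms are given by absolutely convergent integrals. -/
open MeasureTheory Set Filter Topology

namespace Stmt14

open MeasureTheory Set Filter Topology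


noncomputable def h (α : ℝ) (u : ℝ) : ℝ := 1 + Real.cos (Real.log u ^ α)

lemma h_contAt {α : ℝ} (hα : 0 ≤ α) {u : ℝ} (hu : u ≠ 0) : ContinuousAt (h α) u := by
  have h1 : ContinuousAt Real.log u := Real.continuousAt_log hu
  have h2 : ContinuousAt (fun b : ℝ => b ^ α) (Real.log u) :=
    Real.continuousAt_rpow_const _ _ (Or.inr hα)
  exact continuousAt_const.add (Real.continuous_cos.continuousAt.comp (h2.comp h1))

lemma h_bound (α u : ℝ) : ‖h α u‖ ≤ 2 := by
  have := Real.abs_cos_le_one (Real.log u ^ α)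
  rw [h, Real.norm_eq_abs]
  calc |1 + Real.cos (Real.log u ^ α)| ≤ |1| + |Real.cos (Real.log u ^ α)| := abs_add_le _ _
  _ ≤ 1 + 1 := by simp [this]
  _ = 2 := by norm_num

noncomputable def Sr (α : ℝ) (x : ℝ) : ℝ := ∫ u in (1:ℝ)..x, h α u

lemma Sr_bound (α x : ℝ) : ‖Sr α x‖ ≤ 2 * |x - 1| :=
  intervalIntegral.norm_integral_le_of_norm_le_const fun u _ => h_bound α u

lemma h_intble {α : ℝ} (hα : 0 ≤ α) {x : ℝ} (hx : 1 ≤ x) :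
    IntervalIntegrable (h α) volume 1 x := by
  apply ContinuousOn.intervalIntegrable
  intro u hu
  rw [uIcc_of_le hx] at hu
  have : (0:ℝ) < u := lt_of_lt_of_le one_pos hu.1
  exact (h_contAt hα this.ne').continuousWithinAt

lemma Sr_hasDeriv {α : ℝ} (hα : 0 ≤ α) {x : ℝ} (hx : 1 ≤ x) :
    HasDerivAt (Sr α) (h α x) x := by
  have hx0 : (0:ℝ) < x := by linarith
  refine intervalIntegral.integral_hasDerivAt_right (h_intble hα hx) ?_ (h_contAt hα hx0.ne')
  have hco : ContinuousOn (h α) (Ioi 0) :=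
    fun u hu => (h_contAt hα (ne_of_gt hu)).continuousWithinAt
  exact ⟨Ioi 0, Ioi_mem_nhds hx0, hco.aestronglyMeasurable measurableSet_Ioi⟩


lemma norm_cpow_eq {x : ℝ} (hx : 0 < x) (w : ℂ) : ‖(x:ℂ) ^ w‖ = x ^ w.re := by
  rw [Complex.norm_cpow_eq_rpow_re_of_pos hx]

lemma contOn_cpow (w : ℂ) : ContinuousOn (fun x : ℝ => (x:ℂ) ^ w) (Ioi 1) := fun x hx =>
  (Complex.continuousAt_ofReal_cpow_const x w (Or.inr (zero_lt_one.trans hx).ne')).continuousWithinAt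

lemma rpow_int {s : ℂ} (hs : 1 < s.re) (c : ℝ) :
    IntegrableOn (fun x : ℝ => c * x ^ (-s.re)) (Ioi 1) :=
  (integrableOn_Ioi_rpow_of_lt (by linarith) one_pos).const_mul c

lemma contOn_Sr {α : ℝ} (hα : 0 ≤ α) : ContinuousOn (Sr α) (Ioi 1) := fun x hx =>
  ((Sr_hasDeriv hα (le_of_lt hx)).continuousAt).continuousWithinAt

/-- Integrability of the main Mellin integrand. -/
lemma int_main {α : ℝ} (hα : 0 ≤ α) {s : ℂ} (hs : 1 < s.re) :
    IntegrableOn (fun x : ℝ => (↑(Sr α x) : ℂ) * (x:ℂ) ^ (-s - 1)) (Ioi 1) := by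
  apply Integrable.mono' (rpow_int hs 2)
  · exact ((Complex.continuous_ofReal.comp_continuousOn (contOn_Sr hα)).mul
      (contOn_cpow (-s-1))).aestronglyMeasurable measurableSet_Ioi
  · filter_upwards [ae_restrict_mem measurableSet_Ioi] with x hx
    have hx0 : (0:ℝ) < x := zero_lt_one.trans hx
    rw [norm_mul, Complex.norm_real, norm_cpow_eq hx0]
    have hx1 : (1:ℝ) < x := hx
    have h1 : ‖Sr α x‖ ≤ 2 * x := by
      refine (Sr_bound α x).trans ?_
      rw [abs_of_nonneg (by linarith : (0:ℝ) ≤ x - 1)]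
      linarith
    have h2 : (0:ℝ) < x ^ ((-s-1).re) := Real.rpow_pos_of_pos hx0 _
    calc ‖Sr α x‖ * x ^ ((-s-1).re) ≤ (2 * x) * x ^ ((-s-1).re) :=
          mul_le_mul_of_nonneg_right h1 h2.le
      _ = 2 * x ^ (-s.re) := by
          have hre : (-s-1).re = -s.re - 1 := by
            simp [Complex.sub_re, Complex.neg_re, Complex.one_re]
          rw [hre, Real.rpow_sub hx0, Real.rpow_one]
          field_simp

/-- Integrability of `h(x) x^{-s}`. -/
lemma int_hcpow {α : ℝ} (hα : 0 ≤ α) {s : ℂ} (hs : 1 < s.re) :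
    IntegrableOn (fun x : ℝ => (↑(h α x) : ℂ) * (x:ℂ) ^ (-s)) (Ioi 1) := by
  apply Integrable.mono' (rpow_int hs 2)
  · have hco : ContinuousOn (h α) (Ioi 1) := fun u hu =>
      (h_contAt hα (zero_lt_one.trans hu).ne').continuousWithinAt
    exact ((Complex.continuous_ofReal.comp_continuousOn hco).mul
      (contOn_cpow (-s))).aestronglyMeasurable measurableSet_Ioi
  · filter_upwards [ae_restrict_mem measurableSet_Ioi] with x hx
    have hx0 : (0:ℝ) < x := zero_lt_one.trans hx
    rw [norm_mul, Complex.norm_real, norm_cpow_eq hx0]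
    have : (-s).re = -s.re := by simp
    rw [this]
    exact mul_le_mul_of_nonneg_right (h_bound α x) (Real.rpow_pos_of_pos hx0 _).le

lemma cpow_int {s : ℂ} (hs : 1 < s.re) :
    IntegrableOn (fun x : ℝ => (x:ℂ) ^ (-s)) (Ioi 1) :=
  integrableOn_Ioi_cpow_of_lt (by simp; linarith) one_pos

lemma int_coscpow {α : ℝ} (hα : 0 ≤ α) {s : ℂ} (hs : 1 < s.re) :
    IntegrableOn (fun x : ℝ => (↑(Real.cos (Real.log x ^ α)) : ℂ) * (x:ℂ) ^ (-s)) (Ioi 1) := by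
  have hsub := (int_hcpow hα hs).sub (cpow_int hs)
  refine IntegrableOn.congr_fun hsub (fun x _ => ?_) measurableSet_Ioi
  simp only [Pi.sub_apply, h]
  push_cast
  ring

lemma exp_image_Ioi : Real.exp '' Ioi 0 = Ioi 1 := by
  ext y
  constructor
  · rintro ⟨x, hx, rfl⟩
    simpa using Real.exp_lt_exp.mpr (mem_Ioi.mp hx)
  · intro hy
    have h1 : (0:ℝ) < y := lt_trans one_pos hy
    exact ⟨Real.log y, Real.log_pos hy, Real.exp_log h1⟩

lemma exp_image_Ici : Real.exp '' Ici 0 = Ici 1 := by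
  ext y
  constructor
  · rintro ⟨x, hx, rfl⟩
    simpa using Real.exp_le_exp.mpr (mem_Ici.mp hx)
  · intro hy
    have h1 : (0:ℝ) < y := lt_of_lt_of_le one_pos hy
    exact ⟨Real.log y, Real.log_nonneg hy, Real.exp_log h1⟩

/-- Integrability of the exponentials on `Ici 0`. -/
lemma int_E {α : ℝ} (hα : 0 ≤ α) {s : ℂ} (hs : 1 < s.re) {b : ℂ} (hb : b.re = 0) :
    IntegrableOn (fun t : ℝ => Complex.exp (b * (↑(t ^ α) : ℂ) + (1 - s) * ↑t)) (Ici 0) := by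
  rw [integrableOn_Ici_iff_integrableOn_Ioi]
  apply Integrable.mono' (exp_neg_integrableOn_Ioi 0 (by linarith : (0:ℝ) < s.re - 1))
  · have hc : Continuous (fun t : ℝ => Complex.exp (b * (↑(t ^ α) : ℂ) + (1 - s) * ↑t)) := by
      have h1 : Continuous fun t : ℝ => t ^ α :=
        continuous_iff_continuousAt.mpr fun t => Real.continuousAt_rpow_const _ _ (Or.inr hα)
      continuity
    exact hc.aestronglyMeasurable
  · filter_upwards [ae_restrict_mem measurableSet_Ioi] with t _
    rw [Complex.norm_exp]
    have : (b * (↑(t ^ α) : ℂ) + (1 - s) * ↑t).re = (1 - s.re) * t := by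
      simp [Complex.add_re, Complex.mul_re, hb, Complex.sub_re]
    rw [this, show (1 - s.re) * t = -(s.re - 1) * t by ring]

lemma s_ne_zero {s : ℂ} (hs : 1 < s.re) : s ≠ 0 := by
  intro hs0; rw [hs0] at hs; simp at hs; linarith

lemma s_ne_one {s : ℂ} (hs : 1 < s.re) : s ≠ 1 := by
  intro hs0; rw [hs0] at hs; simp at hs

/-- Integration by parts: the Mellin transform of `Sr` equals `(∫ h(x) x^{-s})/s`. -/
lemma mellin_eq {α : ℝ} (hα : 0 ≤ α) {s : ℂ} (hs : 1 < s.re) :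
    (∫ x in Ioi (1:ℝ), (↑(Sr α x) : ℂ) * (x:ℂ) ^ (-s - 1))
      = (∫ x in Ioi (1:ℝ), (↑(h α x) : ℂ) * (x:ℂ) ^ (-s)) / s := by
  have hs0 : s ≠ 0 := s_ne_zero hs
  set P : ℝ → ℂ := fun x => (↑(Sr α x) : ℂ) * ((x:ℂ) ^ (-s) / (-s)) with hP
  set f' : ℝ → ℂ := fun x =>
    (↑(Sr α x) : ℂ) * (x:ℂ) ^ (-s - 1) - (↑(h α x) : ℂ) * (x:ℂ) ^ (-s) / s with hf'
  have hderiv : ∀ x ∈ Ici (1:ℝ), HasDerivAt P (f' x) x := by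
    intro x hx
    have hx1 : (1:ℝ) ≤ x := hx
    have hx0 : (0:ℝ) < x := lt_of_lt_of_le one_pos hx1
    have d1 : HasDerivAt (fun y : ℝ => (↑(Sr α y) : ℂ)) (↑(h α x) : ℂ) x :=
      (Sr_hasDeriv hα hx1).ofReal_comp
    have d2 : HasDerivAt (fun y : ℝ => (y:ℂ) ^ (-s) / (-s)) ((x:ℂ) ^ (-s - 1)) x := by
      have hr : (-s - 1 : ℂ) ≠ -1 := by
        intro hr; apply hs0; linear_combination -hr
      have := hasDerivAt_ofReal_cpow_const' hx0.ne' hr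
      have e : -s - 1 + 1 = -s := by ring
      simpa only [e] using this
    have := d1.mul d2
    convert this using 1
    · rfl
    · rfl
    simp only [f']
    ring
  have f'int : IntegrableOn f' (Ioi 1) :=
    (int_main hα hs).sub ((int_hcpow hα hs).div_const s)
  have htend : Tendsto P atTop (𝓝 0) := by
    apply squeeze_zero_norm'
      (a := fun x : ℝ => (2 / ‖s‖) * x ^ (-(s.re - 1)))
    · filter_upwards [eventually_ge_atTop (1:ℝ)] with x hx1
      have hx0 : (0:ℝ) < x := lt_of_lt_of_le one_pos hx1
      have hns : (0:ℝ) < ‖s‖ := by simpa using hs0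
      rw [hP]
      simp only [norm_mul, norm_div, norm_neg, Complex.norm_real]
      rw [norm_cpow_eq hx0]
      have h1 : ‖Sr α x‖ ≤ 2 * x := by
        refine (Sr_bound α x).trans ?_
        rw [abs_of_nonneg (by linarith : (0:ℝ) ≤ x - 1)]; linarith
      have h2 : (0:ℝ) ≤ x ^ ((-s).re) / ‖s‖ := by positivity
      calc ‖Sr α x‖ * (x ^ ((-s).re) / ‖s‖) ≤ (2 * x) * (x ^ ((-s).re) / ‖s‖) :=
            mul_le_mul_of_nonneg_right h1 h2
        _ = (2 / ‖s‖) * x ^ (-(s.re - 1)) := by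
            have hre : (-s).re = -s.re := by simp
            rw [hre, show -(s.re - 1) = 1 + -s.re by ring,
              Real.rpow_add hx0, Real.rpow_one]
            field_simp
    · have := (tendsto_rpow_neg_atTop (by linarith : (0:ℝ) < s.re - 1)).const_mul (2 / ‖s‖)
      simpa using this
  have key := integral_Ioi_of_hasDerivAt_of_tendsto' hderiv f'int htend
  have hP1 : P 1 = 0 := by
    simp [hP, Sr, intervalIntegral.integral_same]
  rw [hP1, zero_sub, neg_zero] at key
  rw [hf'] at key
  rw [integral_sub (int_main hα hs) ((int_hcpow hα hs).div_const s)] at key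
  rw [integral_div] at key
  have := sub_eq_zero.mp key
  exact this

lemma int_cosE {α : ℝ} (hα : 0 ≤ α) {s : ℂ} (hs : 1 < s.re) :
    IntegrableOn (fun t : ℝ => (↑(Real.cos (t ^ α)) : ℂ) * Complex.exp ((1 - s) * ↑t))
      (Ici 0) := by
  rw [integrableOn_Ici_iff_integrableOn_Ioi]
  apply Integrable.mono' (exp_neg_integrableOn_Ioi 0 (by linarith : (0:ℝ) < s.re - 1))
  · have h1 : Continuous fun t : ℝ => t ^ α :=
      continuous_iff_continuousAt.mpr fun t => Real.continuousAt_rpow_const _ _ (Or.inr hα)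
    have hc : Continuous fun t : ℝ =>
        (↑(Real.cos (t ^ α)) : ℂ) * Complex.exp ((1 - s) * ↑t) := by continuity
    exact hc.aestronglyMeasurable
  · filter_upwards [ae_restrict_mem measurableSet_Ioi] with t _
    rw [norm_mul, Complex.norm_real, Complex.norm_exp]
    have hre : ((1 - s) * (t:ℂ)).re = (1 - s.re) * t := by
      simp [Complex.mul_re, Complex.sub_re]
    rw [hre, Real.norm_eq_abs, show (1 - s.re) * t = -(s.re - 1) * t by ring]
    calc |Real.cos (t ^ α)| * Real.exp (-(s.re - 1) * t)
        ≤ 1 * Real.exp (-(s.re - 1) * t) :=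
          mul_le_mul_of_nonneg_right (Real.abs_cos_le_one _) (Real.exp_pos _).le
      _ = Real.exp (-(s.re - 1) * t) := one_mul _

/-- Change of variables `x = exp t`. -/
lemma cos_subst {α : ℝ} (hα : 0 ≤ α) {s : ℂ} (hs : 1 < s.re) :
    (∫ x in Ioi (1:ℝ), (↑(Real.cos (Real.log x ^ α)) : ℂ) * (x:ℂ) ^ (-s))
      = ∫ t in Ioi (0:ℝ), (↑(Real.cos (t ^ α)) : ℂ) * Complex.exp ((1 - s) * ↑t) := by
  have hpt : ∀ x : ℝ, Real.exp x •
      ((fun u : ℝ => (↑(Real.cos (Real.log u ^ α)) : ℂ) * (u:ℂ) ^ (-s)) ∘ Real.exp) x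
      = (↑(Real.cos (x ^ α)) : ℂ) * Complex.exp ((1 - s) * ↑x) := by
    intro x
    have h0 : ((Real.exp x : ℝ) : ℂ) ≠ 0 := by
      exact_mod_cast (Real.exp_pos x).ne'
    simp only [Function.comp_apply, Real.log_exp]
    rw [Complex.cpow_def_of_ne_zero h0, ← Complex.ofReal_log (Real.exp_pos x).le,
      Real.log_exp, Complex.real_smul, Complex.ofReal_exp,
      show (1 - s) * (x:ℂ) = ↑x + ↑x * (-s) by ring, Complex.exp_add]
    ring
  have key := integral_comp_smul_deriv_Ioi (f := Real.exp) (f' := Real.exp)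
    (g := fun u : ℝ => (↑(Real.cos (Real.log u ^ α)) : ℂ) * (u:ℂ) ^ (-s)) (a := 0)
    (Real.continuous_exp.continuousOn) Real.tendsto_exp_atTop
    (fun x _ => (Real.hasDerivAt_exp x).hasDerivWithinAt)
    (by
      rw [exp_image_Ioi]
      have hcos : ContinuousOn (fun u : ℝ => Real.cos (Real.log u ^ α)) (Ioi 1) :=
        fun u hu => (Real.continuous_cos.continuousAt.comp
          ((Real.continuousAt_rpow_const _ _ (Or.inr hα)).comp
            (Real.continuousAt_log (zero_lt_one.trans hu).ne'))).continuousWithinAt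
      exact (Complex.continuous_ofReal.comp_continuousOn hcos).mul (contOn_cpow (-s)))
    (by
      rw [exp_image_Ici, integrableOn_Ici_iff_integrableOn_Ioi]
      exact int_coscpow hα hs)
    (by
      refine IntegrableOn.congr_fun (int_cosE hα hs) (fun x _ => ?_) measurableSet_Ici
      exact (hpt x).symm)
  rw [Real.exp_zero] at key
  rw [← key]
  exact setIntegral_congr_fun measurableSet_Ioi fun x _ => hpt x

lemma cos_split {α : ℝ} (hα : 0 ≤ α) {s : ℂ} (hs : 1 < s.re) :
    (∫ t in Ioi (0:ℝ), (↑(Real.cos (t ^ α)) : ℂ) * Complex.exp ((1 - s) * ↑t))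
      = ((∫ t in Ioi (0:ℝ), Complex.exp (Complex.I * (↑(t ^ α) : ℂ) + (1 - s) * ↑t))
        + ∫ t in Ioi (0:ℝ), Complex.exp (-Complex.I * (↑(t ^ α) : ℂ) + (1 - s) * ↑t)) / 2 := by
  have i1 : IntegrableOn
      (fun t : ℝ => Complex.exp (Complex.I * (↑(t ^ α) : ℂ) + (1 - s) * ↑t)) (Ioi 0) :=
    (int_E hα hs (b := Complex.I) (by simp)).mono_set Ioi_subset_Ici_self
  have i2 : IntegrableOn
      (fun t : ℝ => Complex.exp (-Complex.I * (↑(t ^ α) : ℂ) + (1 - s) * ↑t)) (Ioi 0) :=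
    (int_E hα hs (b := -Complex.I) (by simp)).mono_set Ioi_subset_Ici_self
  rw [← integral_add i1 i2, ← integral_div]
  refine setIntegral_congr_fun measurableSet_Ioi fun t _ => ?_
  have h2 : (↑(Real.cos (t ^ α)) : ℂ)
      = (Complex.exp (Complex.I * ↑(t ^ α)) + Complex.exp (-Complex.I * ↑(t ^ α))) / 2 := by
    rw [Complex.ofReal_cos, eq_div_iff (two_ne_zero), mul_comm, Complex.two_cos]
    ring_nf
  rw [h2, Complex.exp_add, Complex.exp_add]
  ring

lemma hcpow_val {α : ℝ} (hα : 0 ≤ α) {s : ℂ} (hs : 1 < s.re) :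
    (∫ x in Ioi (1:ℝ), (↑(h α x) : ℂ) * (x:ℂ) ^ (-s))
      = 1 / (s - 1)
        + ((∫ t in Ioi (0:ℝ), Complex.exp (Complex.I * (↑(t ^ α) : ℂ) + (1 - s) * ↑t))
          + ∫ t in Ioi (0:ℝ), Complex.exp (-Complex.I * (↑(t ^ α) : ℂ) + (1 - s) * ↑t)) / 2 := by
  have hsplit : ∀ x : ℝ, (↑(h α x) : ℂ) * (x:ℂ) ^ (-s)
      = (x:ℂ) ^ (-s) + (↑(Real.cos (Real.log x ^ α)) : ℂ) * (x:ℂ) ^ (-s) := by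
    intro x; rw [h]; push_cast; ring
  rw [setIntegral_congr_fun measurableSet_Ioi fun x _ => hsplit x,
    integral_add (cpow_int hs) (int_coscpow hα hs)]
  have hv : (∫ x in Ioi (1:ℝ), (x:ℂ) ^ (-s)) = 1 / (s - 1) := by
    rw [integral_Ioi_cpow_of_lt (by simp; linarith) one_pos]
    have hs1 : s - 1 ≠ 0 := sub_ne_zero.mpr (s_ne_one hs)
    have hs1' : -s + 1 ≠ 0 := by
      intro hc; apply hs1; linear_combination -hc
    rw [Complex.ofReal_one, Complex.one_cpow]
    field_simp
    linear_combination -(s-1)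
  rw [hv, cos_subst hα hs, cos_split hα hs]

end Stmt14

open Stmt14

/-- The Mellin transform of `S(x) = ∫₁ˣ (1 + cos((log u)^α)) du` in terms of
the Fourier–Laplace transform `F_{α,0}(z) = ∫₀^∞ exp(i t^α − i z t) dt`. -/
theorem stmt_14 (α : ℝ) (hα : 1 < α) (s : ℂ) (hs : 1 < s.re) :
    IntegrableOn (fun x : ℝ =>
      (↑(∫ u in (1:ℝ)..x, (1 + Real.cos (Real.log u ^ α))) : ℂ) * (x : ℂ) ^ (-s - 1))
      (Ioi 1) ∧
    (∫ x in Ioi (1:ℝ),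
        (↑(∫ u in (1:ℝ)..x, (1 + Real.cos (Real.log u ^ α))) : ℂ) *
          (x : ℂ) ^ (-s - 1)) =
      1 / (s - 1) - 1 / s +
        ((∫ t in Ioi (0:ℝ), Complex.exp (Complex.I * (↑(t ^ α) : ℂ) -
            Complex.I * (Complex.I * (1 - s)) * t)) +
          (starRingEnd ℂ) (∫ t in Ioi (0:ℝ),
            Complex.exp (Complex.I * (↑(t ^ α) : ℂ) -
              Complex.I * (Complex.I * (1 - (starRingEnd ℂ) s)) * t))) / (2 * s) := by
  have hα0 : (0:ℝ) ≤ α := by linarith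
  have hfeq : (fun x : ℝ =>
      (↑(∫ u in (1:ℝ)..x, (1 + Real.cos (Real.log u ^ α))) : ℂ) * (x : ℂ) ^ (-s - 1))
      = fun x : ℝ => (↑(Sr α x) : ℂ) * (x:ℂ) ^ (-s - 1) := rfl
  constructor
  · rw [hfeq]; exact int_main hα0 hs
  have hT1 : (∫ t in Ioi (0:ℝ), Complex.exp (Complex.I * (↑(t ^ α) : ℂ) -
      Complex.I * (Complex.I * (1 - s)) * t))
      = ∫ t in Ioi (0:ℝ), Complex.exp (Complex.I * (↑(t ^ α) : ℂ) + (1 - s) * ↑t) := by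
    refine setIntegral_congr_fun measurableSet_Ioi fun t _ => ?_
    congr 1
    linear_combination (-(1 - s) * (t:ℂ)) * Complex.I_mul_I
  have hT2 : (starRingEnd ℂ) (∫ t in Ioi (0:ℝ),
      Complex.exp (Complex.I * (↑(t ^ α) : ℂ) -
        Complex.I * (Complex.I * (1 - (starRingEnd ℂ) s)) * t))
      = ∫ t in Ioi (0:ℝ), Complex.exp (-Complex.I * (↑(t ^ α) : ℂ) + (1 - s) * ↑t) := by
    rw [← integral_conj]
    refine setIntegral_congr_fun measurableSet_Ioi fun t _ => ?_
    rw [← Complex.exp_conj]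
    congr 1
    simp only [map_sub, map_mul, Complex.conj_I, Complex.conj_ofReal, Complex.conj_conj,
      map_one]
    linear_combination (-(1 - s) * (t:ℂ)) * Complex.I_mul_I
  rw [hfeq, mellin_eq hα0 hs, hcpow_val hα0 hs, hT1, hT2]
  have hs0 : s ≠ 0 := s_ne_zero hs
  have hs1 : s - 1 ≠ 0 := sub_ne_zero.mpr (s_ne_one hs)
  field_simp
  ring
end

section
/- Let α > 1 and define S(x) = ∫₁^x (1 + cos((log u)^α)) du for x ≥ 1. Then limsup_{x→∞} (log x)^{α−1} |S(x) − x| / x = 1/α. In particular, for every ε > 0, S(x) − x is not O(x^{1−ε}), so S disproves Müger's conjecture that S(x) = Ax + O(x^{(σ₀+2)/3+ε}) should follow from analytic continuation of the Mellin transform past Re s = σ₀ ∈ (0,1). -/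
open MeasureTheory Set Filter
open Real Topology


noncomputable def stmt16_r (α t : ℝ) : ℝ :=
  Real.exp t * Real.sin (t^α) * ((1-α) * t^(-α)) / α
    + Real.exp t * Real.cos (t^α) * ((2-2*α)*t^(1-2*α) + t^(2-2*α)) / α^2

noncomputable def stmt16_Phi (α t : ℝ) : ℝ :=
  Real.exp t * Real.sin (t^α) * t^(1-α) / α + Real.exp t * Real.cos (t^α) * t^(2-2*α) / α^2

lemma stmt16_contOn' {c : ℝ} : ContinuousOn (fun t : ℝ => t ^ c) (Ici 1) := fun t ht =>
  (Real.continuousAt_rpow_const t c (Or.inl (ne_of_gt (lt_of_lt_of_le one_pos ht)))).continuousWithinAt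

lemma stmt16_r_cont (α : ℝ) : ContinuousOn (stmt16_r α) (Ici 1) := by
  unfold stmt16_r
  apply ContinuousOn.add
  · exact (((Real.continuous_exp.continuousOn.mul
      (Real.continuous_sin.comp_continuousOn stmt16_contOn')).mul
      (continuousOn_const.mul stmt16_contOn')).div_const α)
  · exact (((Real.continuous_exp.continuousOn.mul
      (Real.continuous_cos.comp_continuousOn stmt16_contOn')).mul
      ((continuousOn_const.mul stmt16_contOn').add stmt16_contOn')).div_const (α^2))

lemma stmt16_r_bound (α : ℝ) (hα : 1 < α) {t : ℝ} (ht : 1 ≤ t) :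
    |stmt16_r α t| ≤ 4 * (Real.exp t * t^(-(min α (2*α-2)))) := by
  set β := min α (2*α-2) with hβdef
  have htpos : (0:ℝ) < t := lt_of_lt_of_le one_pos ht
  have hα0 : (0:ℝ) < α := by linarith
  have e1 : t^(-α) ≤ t^(-β) :=
    Real.rpow_le_rpow_of_exponent_le ht (neg_le_neg (min_le_left _ _))
  have hβ2 : β ≤ 2*α-2 := min_le_right _ _
  have e2 : t^(1-2*α) ≤ t^(-β) :=
    Real.rpow_le_rpow_of_exponent_le ht (by linarith)
  have e3 : t^(2-2*α) ≤ t^(-β) :=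
    Real.rpow_le_rpow_of_exponent_le ht (by linarith)
  have hBpos : (0:ℝ) < t^(-β) := Real.rpow_pos_of_pos htpos _
  have h1 : |Real.exp t * Real.sin (t^α) * ((1-α) * t^(-α)) / α| ≤ Real.exp t * t^(-β) := by
    rw [abs_div, abs_of_pos hα0, abs_mul, abs_mul, abs_mul, abs_of_pos (Real.exp_pos t),
      abs_of_pos (Real.rpow_pos_of_pos htpos _), div_le_iff₀ hα0,
      abs_of_nonpos (by linarith : (1:ℝ) - α ≤ 0)]
    calc Real.exp t * |Real.sin (t^α)| * (-(1-α) * t^(-α))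
        ≤ Real.exp t * 1 * ((α-1) * t^(-β)) := by
          have hh : -(1-α) = α - 1 := by ring
          rw [hh]
          exact mul_le_mul
            (mul_le_mul_of_nonneg_left (Real.abs_sin_le_one _) (Real.exp_pos t).le)
            (mul_le_mul_of_nonneg_left e1 (by linarith))
            (mul_nonneg (by linarith) (Real.rpow_pos_of_pos htpos _).le)
            (by positivity)
      _ ≤ Real.exp t * t^(-β) * α := by nlinarith [Real.exp_pos t]
  have h2 : |Real.exp t * Real.cos (t^α) * ((2-2*α)*t^(1-2*α) + t^(2-2*α)) / α^2|
      ≤ 3 * (Real.exp t * t^(-β)) := by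
    have hα2 : (0:ℝ) < α^2 := by positivity
    rw [abs_div, abs_of_pos hα2, abs_mul, abs_mul, abs_of_pos (Real.exp_pos t),
      div_le_iff₀ hα2]
    have habs : |(2-2*α)*t^(1-2*α) + t^(2-2*α)| ≤ (2*α-1) * t^(-β) := by
      calc |(2-2*α)*t^(1-2*α) + t^(2-2*α)| ≤ |(2-2*α)*t^(1-2*α)| + |t^(2-2*α)| := abs_add_le _ _
        _ = (2*α-2)*t^(1-2*α) + t^(2-2*α) := by
            rw [abs_mul, abs_of_nonpos (by linarith : (2:ℝ)-2*α ≤ 0),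
              abs_of_pos (Real.rpow_pos_of_pos htpos _),
              abs_of_pos (Real.rpow_pos_of_pos htpos _)]
            ring
        _ ≤ (2*α-2)*t^(-β) + t^(-β) := by
            have h22 : (0:ℝ) ≤ 2*α-2 := by linarith
            exact add_le_add (mul_le_mul_of_nonneg_left e2 h22) e3
        _ = (2*α-1)*t^(-β) := by ring
    calc Real.exp t * |Real.cos (t^α)| * |(2-2*α)*t^(1-2*α) + t^(2-2*α)|
        ≤ Real.exp t * 1 * ((2*α-1) * t^(-β)) := by
          exact mul_le_mul
            (mul_le_mul_of_nonneg_left (Real.abs_cos_le_one _) (Real.exp_pos t).le)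
            habs (abs_nonneg _) (by positivity)
      _ ≤ 3 * (Real.exp t * t^(-β)) * α^2 := by
          nlinarith [Real.exp_pos t, mul_pos (Real.exp_pos t) hBpos, sq_nonneg (α-1)]
  calc |stmt16_r α t| ≤ |Real.exp t * Real.sin (t^α) * ((1-α) * t^(-α)) / α|
          + |Real.exp t * Real.cos (t^α) * ((2-2*α)*t^(1-2*α) + t^(2-2*α)) / α^2| := abs_add_le _ _
    _ ≤ Real.exp t * t^(-β) + 3 * (Real.exp t * t^(-β)) := add_le_add h1 h2
    _ = 4 * (Real.exp t * t^(-β)) := by ring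

lemma stmt16_contOn {c : ℝ} : ContinuousOn (fun t : ℝ => t ^ c) (Ici 1) := fun t ht =>
  (Real.continuousAt_rpow_const t c (Or.inl (ne_of_gt (lt_of_lt_of_le one_pos ht)))).continuousWithinAt

lemma stmt16_uIcc {a b : ℝ} (ha : 1 ≤ a) (hb : 1 ≤ b) : Set.uIcc a b ⊆ Ici 1 := by
  intro x hx
  rw [Set.mem_uIcc] at hx
  rcases hx with ⟨h, _⟩ | ⟨h, _⟩
  · exact le_trans ha h
  · exact le_trans hb h

lemma stmt16_ii (c : ℝ) {a b : ℝ} (ha : 1 ≤ a) (hb : 1 ≤ b) :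
    IntervalIntegrable (fun t : ℝ => Real.exp t * t ^ c) volume a b :=
  ((Real.continuous_exp.continuousOn.mul stmt16_contOn).mono (stmt16_uIcc ha hb)).intervalIntegrable

lemma stmt16_intbound {β T : ℝ} (hβ : 0 < β) (hT : 1 ≤ T) :
    ∫ t in (1:ℝ)..T, Real.exp t * t^(-β) ≤
      Real.exp (T/2) * T + 2^β * Real.exp T * T^(-β) := by
  have h2β : (1:ℝ) ≤ 2^β * T^(-β) → Real.exp T ≤ 2^β * Real.exp T * T^(-β) := by
    intro h
    calc Real.exp T = Real.exp T * 1 := by ring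
    _ ≤ Real.exp T * (2^β * T^(-β)) := by
        apply mul_le_mul_of_nonneg_left h (Real.exp_nonneg T)
    _ = 2^β * Real.exp T * T^(-β) := by ring
  rcases le_total T 2 with hT2 | hT2
  · -- small T
    have h1 : ∫ t in (1:ℝ)..T, Real.exp t * t^(-β) ≤ ∫ t in (1:ℝ)..T, Real.exp t := by
      apply intervalIntegral.integral_mono_on hT (stmt16_ii (-β) le_rfl hT)
        (Real.continuous_exp.intervalIntegrable 1 T)
      intro x hx
      have hx1 : (1:ℝ) ≤ x := hx.1
      calc Real.exp x * x^(-β) ≤ Real.exp x * 1 :=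
        mul_le_mul_of_nonneg_left (Real.rpow_le_one_of_one_le_of_nonpos hx1 (by linarith)) (Real.exp_nonneg x)
      _ = Real.exp x := by ring
    have h2 : ∫ t in (1:ℝ)..T, Real.exp t = Real.exp T - Real.exp 1 := integral_exp
    have h3 : (1:ℝ) ≤ 2^β * T^(-β) := by
      have : (2:ℝ)^(-β) ≤ T^(-β) := Real.rpow_le_rpow_of_nonpos (by linarith) hT2 (by linarith)
      have h2b : (0:ℝ) < 2^β := Real.rpow_pos_of_pos two_pos β
      calc (1:ℝ) = 2^β * 2^(-β) := by
            rw [← Real.rpow_add two_pos]; simp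
      _ ≤ 2^β * T^(-β) := by nlinarith
    have := h2β h3
    nlinarith [Real.exp_pos (T/2), Real.exp_pos 1, mul_pos (Real.exp_pos (T/2)) (lt_of_lt_of_le one_pos hT)]
  · -- T ≥ 2 : split at T/2
    have hT2' : (1:ℝ) ≤ T/2 := by linarith
    have hsplit := intervalIntegral.integral_add_adjacent_intervals
      (stmt16_ii (-β) le_rfl hT2') (stmt16_ii (-β) hT2' (by linarith))
    rw [← hsplit]
    have hb1 : ∫ t in (1:ℝ)..(T/2), Real.exp t * t^(-β) ≤ Real.exp (T/2) * T := by
      have : ∫ t in (1:ℝ)..(T/2), Real.exp t * t^(-β) ≤ ∫ t in (1:ℝ)..(T/2), Real.exp (T/2) := by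
        apply intervalIntegral.integral_mono_on hT2' (stmt16_ii (-β) le_rfl hT2')
          (intervalIntegrable_const)
        intro x hx
        calc Real.exp x * x^(-β) ≤ Real.exp x * 1 :=
          mul_le_mul_of_nonneg_left (Real.rpow_le_one_of_one_le_of_nonpos hx.1 (by linarith)) (Real.exp_nonneg x)
        _ = Real.exp x := by ring
        _ ≤ Real.exp (T/2) := Real.exp_le_exp.mpr hx.2
      rw [intervalIntegral.integral_const] at this
      have : ∫ t in (1:ℝ)..(T/2), Real.exp t * t^(-β) ≤ (T/2 - 1) * Real.exp (T/2) := by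
        simpa [smul_eq_mul] using this
      nlinarith [Real.exp_pos (T/2)]
    have hb2 : ∫ t in (T/2)..T, Real.exp t * t^(-β) ≤ 2^β * Real.exp T * T^(-β) := by
      have hTpos : (0:ℝ) < T/2 := by linarith
      have hcomp : ∫ t in (T/2)..T, Real.exp t * t^(-β) ≤ ∫ t in (T/2)..T, Real.exp t * (T/2)^(-β) := by
        apply intervalIntegral.integral_mono_on (by linarith) (stmt16_ii (-β) hT2' (by linarith))
          ((Real.continuous_exp.mul continuous_const).intervalIntegrable _ _)
        intro x hx
        exact mul_le_mul_of_nonneg_left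
          (Real.rpow_le_rpow_of_nonpos hTpos hx.1 (by linarith)) (Real.exp_nonneg x)
      have heq : ∫ t in (T/2)..T, Real.exp t * (T/2)^(-β) = (Real.exp T - Real.exp (T/2)) * (T/2)^(-β) := by
        rw [intervalIntegral.integral_mul_const, integral_exp]
      have hhalf : (T/2:ℝ)^(-β) = 2^β * T^(-β) := by
        rw [Real.div_rpow (by linarith) (by norm_num), Real.rpow_neg (by norm_num : (0:ℝ) ≤ 2)]
        field_simp
      rw [heq, hhalf] at hcomp
      have h2b : (0:ℝ) < 2^β * T^(-β) :=
        mul_pos (Real.rpow_pos_of_pos two_pos β) (Real.rpow_pos_of_pos (by linarith) _)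
      nlinarith [Real.exp_pos (T/2)]
    linarith

lemma stmt16_deriv (α : ℝ) (hα : 1 < α) {t : ℝ} (ht : 1 ≤ t) :
    HasDerivAt (fun s => Real.exp s * Real.sin (s^α) * s^(1-α) / α
                 + Real.exp s * Real.cos (s^α) * s^(2-2*α) / α^2)
      (Real.exp t * Real.cos (t^α)
        + (Real.exp t * Real.sin (t^α) * ((1-α) * t^(-α)) / α
          + Real.exp t * Real.cos (t^α) * ((2-2*α)*t^(1-2*α) + t^(2-2*α)) / α^2)) t := by
  have htpos : (0:ℝ) < t := lt_of_lt_of_le one_pos ht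
  have ht0 : t ≠ 0 := ne_of_gt htpos
  have hα0 : α ≠ 0 := by positivity
  have hrpow : ∀ c : ℝ, HasDerivAt (fun s : ℝ => s ^ c) (c * t^(c-1)) t :=
    fun c => Real.hasDerivAt_rpow_const (Or.inl ht0)
  have hsin : HasDerivAt (fun s : ℝ => Real.sin (s^α)) (Real.cos (t^α) * (α * t^(α-1))) t :=
    (Real.hasDerivAt_sin _).comp t (hrpow α)
  have hcos : HasDerivAt (fun s : ℝ => Real.cos (s^α)) (-Real.sin (t^α) * (α * t^(α-1))) t :=
    (Real.hasDerivAt_cos _).comp t (hrpow α)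
  have hA : HasDerivAt (fun s => Real.exp s * Real.sin (s^α) * s^(1-α) / α)
      (((Real.exp t * Real.sin (t^α) + Real.exp t * (Real.cos (t^α) * (α * t^(α-1)))) * t^(1-α)
        + Real.exp t * Real.sin (t^α) * ((1-α) * t^((1-α)-1))) / α) t := by
    exact (((Real.hasDerivAt_exp t).mul hsin).mul (hrpow (1-α))).div_const α
  have hB : HasDerivAt (fun s => Real.exp s * Real.cos (s^α) * s^(2-2*α) / α^2)
      (((Real.exp t * Real.cos (t^α) + Real.exp t * (-Real.sin (t^α) * (α * t^(α-1)))) * t^(2-2*α)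
        + Real.exp t * Real.cos (t^α) * ((2-2*α) * t^((2-2*α)-1))) / α^2) t := by
    exact (((Real.hasDerivAt_exp t).mul hcos).mul (hrpow (2-2*α))).div_const (α^2)
  refine (hA.add hB).congr_deriv ?_
  have hP0 : t ^ (α-1) ≠ 0 := ne_of_gt (Real.rpow_pos_of_pos htpos _)
  have hQ : t^(1-α) = (t^(α-1))⁻¹ := by
    rw [show (1-α) = -(α-1) by ring, Real.rpow_neg htpos.le]
  have hR : t^(-α) = (t^(α-1))⁻¹ * t⁻¹ := by
    rw [show -α = (-(α-1)) + (-1) by ring, Real.rpow_add htpos, Real.rpow_neg htpos.le,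
      Real.rpow_neg htpos.le, Real.rpow_one]
  have hW : t^(2-2*α) = (t^(α-1))⁻¹ * (t^(α-1))⁻¹ := by
    rw [show (2-2*α) = (-(α-1)) + (-(α-1)) by ring, Real.rpow_add htpos, Real.rpow_neg htpos.le]
  have hZ : t^(1-2*α) = (t^(α-1))⁻¹ * (t^(α-1))⁻¹ * t⁻¹ := by
    rw [show (1-2*α) = (-(α-1)) + (-(α-1)) + (-1) by ring, Real.rpow_add htpos,
      Real.rpow_add htpos, Real.rpow_neg htpos.le, Real.rpow_neg htpos.le, Real.rpow_one]
  have hR' : t^((1-α)-1) = (t^(α-1))⁻¹ * t⁻¹ := by rw [show (1-α)-1 = -α by ring]; exact hR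
  have hZ' : t^((2-2*α)-1) = (t^(α-1))⁻¹ * (t^(α-1))⁻¹ * t⁻¹ := by
    rw [show (2-2*α)-1 = 1-2*α by ring]; exact hZ
  rw [hQ, hR, hW, hZ, hR', hZ']
  field_simp
  ring

lemma stmt16_derivPhi (α : ℝ) (hα : 1 < α) {t : ℝ} (ht : 1 ≤ t) :
    HasDerivAt (stmt16_Phi α) (Real.exp t * Real.cos (t^α) + stmt16_r α t) t := by
  unfold stmt16_Phi stmt16_r
  exact stmt16_deriv α hα ht

lemma stmt16_ecos_contOn (α : ℝ) (hα : 0 ≤ α) :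
    ContinuousOn (fun t : ℝ => Real.exp t * Real.cos (t^α)) (Ici 0) :=
  Real.continuous_exp.continuousOn.mul (Real.continuous_cos.comp_continuousOn
    (fun t _ => (Real.continuousAt_rpow_const t α (Or.inr hα)).continuousWithinAt))

lemma stmt16_uIcc0 {a b : ℝ} (ha : 0 ≤ a) (hb : 0 ≤ b) : Set.uIcc a b ⊆ Ici 0 := by
  intro x hx
  rw [Set.mem_uIcc] at hx
  rcases hx with ⟨h, _⟩ | ⟨h, _⟩
  · exact le_trans ha h
  · exact le_trans hb h

lemma stmt16_ecos_ii (α : ℝ) (hα : 0 ≤ α) {a b : ℝ} (ha : 0 ≤ a) (hb : 0 ≤ b) :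
    IntervalIntegrable (fun t : ℝ => Real.exp t * Real.cos (t^α)) volume a b :=
  ((stmt16_ecos_contOn α hα).mono (stmt16_uIcc0 ha hb)).intervalIntegrable

lemma stmt16_est (α : ℝ) (hα : 1 < α) {T : ℝ} (hT : 1 ≤ T) :
    |(∫ t in (1:ℝ)..T, Real.exp t * Real.cos (t^α))
        - Real.exp T * Real.sin (T^α) * T^(1-α) / α|
      ≤ 8 + 4*(Real.exp (T/2) * T)
        + 5*(2^(min α (2*α-2)) * Real.exp T * T^(-(min α (2*α-2)))) := by
  set β := min α (2*α-2) with hβdef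
  have hβpos : 0 < β := lt_min (by linarith) (by linarith)
  have hTpos : (0:ℝ) < T := lt_of_lt_of_le one_pos hT
  have hα0 : (0:ℝ) < α := by linarith
  have h2β : (1:ℝ) ≤ 2^β := by
    have := Real.rpow_le_rpow_of_exponent_le (one_le_two) hβpos.le
    simpa using this
  have hderiv : ∀ t ∈ Set.uIcc (1:ℝ) T,
      HasDerivAt (stmt16_Phi α) (Real.exp t * Real.cos (t^α) + stmt16_r α t) t :=
    fun t htt => stmt16_derivPhi α hα (stmt16_uIcc le_rfl hT htt)
  have hint_ecos : IntervalIntegrable (fun t : ℝ => Real.exp t * Real.cos (t^α)) volume 1 T :=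
    stmt16_ecos_ii α (by linarith) (by norm_num) (by linarith)
  have hint_r : IntervalIntegrable (stmt16_r α) volume 1 T :=
    ((stmt16_r_cont α).mono (stmt16_uIcc le_rfl hT)).intervalIntegrable
  have hftc := intervalIntegral.integral_eq_sub_of_hasDerivAt hderiv (hint_ecos.add hint_r)
  rw [intervalIntegral.integral_add hint_ecos hint_r] at hftc
  have hI : (∫ t in (1:ℝ)..T, Real.exp t * Real.cos (t^α))
      = stmt16_Phi α T - stmt16_Phi α 1 - ∫ t in (1:ℝ)..T, stmt16_r α t := by linarith
  -- bound |∫ r|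
  have hr1 : |∫ t in (1:ℝ)..T, stmt16_r α t| ≤ ∫ t in (1:ℝ)..T, |stmt16_r α t| :=
    intervalIntegral.abs_integral_le_integral_abs hT
  have hr2 : (∫ t in (1:ℝ)..T, |stmt16_r α t|)
      ≤ ∫ t in (1:ℝ)..T, 4 * (Real.exp t * t^(-β)) := by
    apply intervalIntegral.integral_mono_on hT hint_r.abs ((stmt16_ii (-β) le_rfl hT).const_mul 4)
    exact fun t htt => stmt16_r_bound α hα htt.1
  have hr3 : (∫ t in (1:ℝ)..T, 4 * (Real.exp t * t^(-β)))
      = 4 * ∫ t in (1:ℝ)..T, Real.exp t * t^(-β) := intervalIntegral.integral_const_mul _ _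
  have hr4 := stmt16_intbound hβpos hT
  have hrfinal : |∫ t in (1:ℝ)..T, stmt16_r α t|
      ≤ 4 * (Real.exp (T/2) * T) + 4 * (2^β * Real.exp T * T^(-β)) := by
    calc |∫ t in (1:ℝ)..T, stmt16_r α t| ≤ ∫ t in (1:ℝ)..T, |stmt16_r α t| := hr1
      _ ≤ 4 * ∫ t in (1:ℝ)..T, Real.exp t * t^(-β) := by rw [← hr3]; exact hr2
      _ ≤ 4 * (Real.exp (T/2) * T + 2^β * Real.exp T * T^(-β)) := by linarith
      _ = 4 * (Real.exp (T/2) * T) + 4 * (2^β * Real.exp T * T^(-β)) := by ring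
  -- bound |Phi T - Main|
  have hPhiT : |stmt16_Phi α T - Real.exp T * Real.sin (T^α) * T^(1-α) / α|
      ≤ 2^β * Real.exp T * T^(-β) := by
    have : stmt16_Phi α T - Real.exp T * Real.sin (T^α) * T^(1-α) / α
        = Real.exp T * Real.cos (T^α) * T^(2-2*α) / α^2 := by unfold stmt16_Phi; ring
    rw [this]
    have hW : T^(2-2*α) ≤ T^(-β) :=
      Real.rpow_le_rpow_of_exponent_le hT (by linarith [min_le_right α (2*α-2)])
    have hα2 : (0:ℝ) < α^2 := by positivity
    rw [abs_div, abs_of_pos hα2, abs_mul, abs_mul, abs_of_pos (Real.exp_pos T),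
      abs_of_pos (Real.rpow_pos_of_pos hTpos _), div_le_iff₀ hα2]
    have h1 : Real.exp T * |Real.cos (T^α)| * T^(2-2*α) ≤ Real.exp T * 1 * T^(-β) :=
      mul_le_mul (mul_le_mul_of_nonneg_left (Real.abs_cos_le_one _) (Real.exp_pos T).le)
        hW (Real.rpow_pos_of_pos hTpos _).le (by positivity)
    have h2 : Real.exp T * 1 * T^(-β) ≤ 2^β * Real.exp T * T^(-β) * α^2 := by
      have hB : (0:ℝ) < T^(-β) := Real.rpow_pos_of_pos hTpos _
      nlinarith [Real.exp_pos T, mul_pos (Real.exp_pos T) hB, sq_nonneg (α-1),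
        mul_pos (mul_pos (Real.exp_pos T) hB) hα2]
    linarith
  -- bound |Phi 1|
  have hPhi1 : |stmt16_Phi α 1| ≤ 6 := by
    have : stmt16_Phi α 1 = Real.exp 1 * Real.sin 1 / α + Real.exp 1 * Real.cos 1 / α^2 := by
      unfold stmt16_Phi
      rw [Real.one_rpow, Real.one_rpow, Real.one_rpow]
      ring
    rw [this]
    have he : Real.exp 1 < 3 := lt_trans Real.exp_one_lt_d9 (by norm_num)
    have hα1 : (1:ℝ) ≤ α := hα.le
    have hs := Real.abs_sin_le_one 1
    have hc := Real.abs_cos_le_one 1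
    have h1 : |Real.exp 1 * Real.sin 1 / α| ≤ 3 := by
      rw [abs_div, abs_of_pos hα0, abs_mul, abs_of_pos (Real.exp_pos 1), div_le_iff₀ hα0]
      nlinarith [Real.exp_pos 1, abs_nonneg (Real.sin 1)]
    have h2 : |Real.exp 1 * Real.cos 1 / α^2| ≤ 3 := by
      have hα2 : (0:ℝ) < α^2 := by positivity
      rw [abs_div, abs_of_pos hα2, abs_mul, abs_of_pos (Real.exp_pos 1), div_le_iff₀ hα2]
      nlinarith [Real.exp_pos 1, abs_nonneg (Real.cos 1)]
    calc |Real.exp 1 * Real.sin 1 / α + Real.exp 1 * Real.cos 1 / α^2|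
        ≤ |Real.exp 1 * Real.sin 1 / α| + |Real.exp 1 * Real.cos 1 / α^2| := abs_add_le _ _
      _ ≤ 6 := by linarith
  -- assemble
  rw [hI]
  have : stmt16_Phi α T - stmt16_Phi α 1 - (∫ t in (1:ℝ)..T, stmt16_r α t)
      - Real.exp T * Real.sin (T^α) * T^(1-α) / α
      = (stmt16_Phi α T - Real.exp T * Real.sin (T^α) * T^(1-α) / α)
        + (- stmt16_Phi α 1) + (- ∫ t in (1:ℝ)..T, stmt16_r α t) := by ring
  rw [this]
  calc |(stmt16_Phi α T - Real.exp T * Real.sin (T^α) * T^(1-α) / α)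
        + (- stmt16_Phi α 1) + (- ∫ t in (1:ℝ)..T, stmt16_r α t)|
      ≤ |stmt16_Phi α T - Real.exp T * Real.sin (T^α) * T^(1-α) / α|
        + |- stmt16_Phi α 1| + |- ∫ t in (1:ℝ)..T, stmt16_r α t| := abs_add_three _ _ _
    _ ≤ 2^β * Real.exp T * T^(-β) + 6 + (4 * (Real.exp (T/2) * T) + 4 * (2^β * Real.exp T * T^(-β))) := by
        rw [abs_neg, abs_neg]
        exact add_le_add (add_le_add hPhiT hPhi1) hrfinal
    _ ≤ 8 + 4*(Real.exp (T/2) * T) + 5*(2^β * Real.exp T * T^(-β)) := by linarith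

lemma stmt16_gcont (α : ℝ) (hα : 1 < α) :
    ContinuousOn (fun u : ℝ => Real.cos (Real.log u ^ α)) (Ioi 0) := by
  intro u hu
  have hu0 : u ≠ 0 := ne_of_gt hu
  have h1 : ContinuousAt Real.log u := Real.continuousAt_log hu0
  have h2 : ContinuousAt (fun y : ℝ => y ^ α) (Real.log u) :=
    Real.continuousAt_rpow_const _ _ (Or.inr (by linarith))
  exact ((Real.continuous_cos.continuousAt.comp h2).comp h1).continuousWithinAt

lemma stmt16_subst (α : ℝ) (hα : 1 < α) {x : ℝ} (hx : 1 ≤ x) :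
    ∫ u in (1:ℝ)..x, Real.cos (Real.log u ^ α)
      = ∫ t in (0:ℝ)..(Real.log x), Real.exp t * Real.cos (t^α) := by
  have hx0 : (0:ℝ) < x := lt_of_lt_of_le one_pos hx
  have hg : ContinuousOn (fun u : ℝ => Real.cos (Real.log u ^ α))
      (Real.exp '' Set.uIcc 0 (Real.log x)) := by
    apply (stmt16_gcont α hα).mono
    rintro u ⟨t, -, rfl⟩
    exact Real.exp_pos t
  have h := intervalIntegral.integral_comp_smul_deriv'
    (f := Real.exp) (f' := Real.exp) (g := fun u : ℝ => Real.cos (Real.log u ^ α))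
    (a := (0:ℝ)) (b := Real.log x)
    (fun t _ => Real.hasDerivAt_exp t) Real.continuous_exp.continuousOn hg
  simp only [Function.comp, Real.log_exp, Real.exp_zero, Real.exp_log hx0, smul_eq_mul] at h
  rw [← h]

lemma stmt16_phi_est (α : ℝ) (hα : 1 < α) {x : ℝ} (hx : Real.exp 1 ≤ x) :
    |Real.log x ^ (α - 1) * |(∫ u in (1:ℝ)..x, (1 + Real.cos (Real.log u ^ α))) - x| / x
      - |Real.sin (Real.log x ^ α)| / α|
    ≤ Real.log x ^ (α-1) * (12 + 4*(Real.exp (Real.log x/2) * Real.log x)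
        + 5*(2^(min α (2*α-2)) * Real.exp (Real.log x) * Real.log x ^(-(min α (2*α-2)))))
      / Real.exp (Real.log x) := by
  set β := min α (2*α-2) with hβdef
  set L := Real.log x with hLdef
  have hx0 : (0:ℝ) < x := lt_of_lt_of_le (Real.exp_pos 1) hx
  have hx1 : (1:ℝ) ≤ x := le_trans (by nlinarith [Real.exp_one_gt_d9]) hx
  have hL1 : (1:ℝ) ≤ L := (Real.le_log_iff_exp_le hx0).mpr hx
  have hLpos : (0:ℝ) < L := lt_of_lt_of_le one_pos hL1
  have hxL : Real.exp L = x := Real.exp_log hx0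
  -- decompose S(x) - x
  have hgint : IntervalIntegrable (fun u : ℝ => Real.cos (Real.log u ^ α)) volume 1 x := by
    apply ((stmt16_gcont α hα).mono _).intervalIntegrable
    intro u hu
    exact lt_of_lt_of_le one_pos (Set.mem_Ici.mp (stmt16_uIcc le_rfl hx1 hu))
  have hS : (∫ u in (1:ℝ)..x, (1 + Real.cos (Real.log u ^ α)))
      = (x - 1) + ∫ u in (1:ℝ)..x, Real.cos (Real.log u ^ α) := by
    rw [intervalIntegral.integral_add intervalIntegrable_const hgint]
    simp
  have hadj := intervalIntegral.integral_add_adjacent_intervals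
    (stmt16_ecos_ii α (by linarith) (a := 0) (b := 1) le_rfl (by norm_num))
    (stmt16_ecos_ii α (by linarith) (a := 1) (b := L) (by norm_num) (by linarith : (0:ℝ) ≤ L))
  have hsub := stmt16_subst α hα hx1
  have hsmall : |∫ t in (0:ℝ)..1, Real.exp t * Real.cos (t^α)| ≤ 3 := by
    have hb : ∀ t ∈ Set.uIoc (0:ℝ) 1, ‖Real.exp t * Real.cos (t^α)‖ ≤ Real.exp 1 := by
      intro t htt
      rw [Set.uIoc_of_le (by norm_num : (0:ℝ) ≤ 1)] at htt
      rw [Real.norm_eq_abs, abs_mul, abs_of_pos (Real.exp_pos t)]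
      calc Real.exp t * |Real.cos (t^α)| ≤ Real.exp t * 1 :=
            mul_le_mul_of_nonneg_left (Real.abs_cos_le_one _) (Real.exp_pos t).le
        _ ≤ Real.exp 1 := by rw [mul_one]; exact Real.exp_le_exp.mpr htt.2
    have := intervalIntegral.norm_integral_le_of_norm_le_const hb
    rw [Real.norm_eq_abs] at this
    have he : Real.exp 1 < 3 := lt_trans Real.exp_one_lt_d9 (by norm_num)
    simp only [sub_zero, abs_one] at this
    nlinarith [abs_nonneg (∫ t in (0:ℝ)..1, Real.exp t * Real.cos (t^α))]
  have hest := stmt16_est α hα hL1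
  -- the main term
  set Main := Real.exp L * Real.sin (L^α) * L^(1-α) / α with hMainDef
  have hkey : |(∫ u in (1:ℝ)..x, (1 + Real.cos (Real.log u ^ α))) - x - Main|
      ≤ 12 + 4*(Real.exp (L/2) * L) + 5*(2^β * Real.exp L * L^(-β)) := by
    have hdecomp : (∫ u in (1:ℝ)..x, (1 + Real.cos (Real.log u ^ α))) - x - Main
        = (∫ t in (0:ℝ)..1, Real.exp t * Real.cos (t^α))
          + ((∫ t in (1:ℝ)..L, Real.exp t * Real.cos (t^α)) - Main) + (-1) := by
      rw [hS, hsub, ← hadj]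
      ring
    rw [hdecomp]
    calc |(∫ t in (0:ℝ)..1, Real.exp t * Real.cos (t^α))
          + ((∫ t in (1:ℝ)..L, Real.exp t * Real.cos (t^α)) - Main) + (-1)|
        ≤ |∫ t in (0:ℝ)..1, Real.exp t * Real.cos (t^α)|
          + |(∫ t in (1:ℝ)..L, Real.exp t * Real.cos (t^α)) - Main| + |(-1 : ℝ)| :=
          abs_add_three _ _ _
      _ ≤ 3 + (8 + 4*(Real.exp (L/2) * L) + 5*(2^β * Real.exp L * L^(-β))) + 1 := by
          have habs1 : |(-1:ℝ)| = 1 := by norm_num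
          rw [habs1]
          exact add_le_add (add_le_add hsmall hest) le_rfl
      _ = 12 + 4*(Real.exp (L/2) * L) + 5*(2^β * Real.exp L * L^(-β)) := by ring
  -- rewrite |sin|/α as L^(α-1)*|Main|/x
  have hLL : L^(α-1) * L^(1-α) = 1 := by
    rw [← Real.rpow_add hLpos]
    norm_num
  have hBe : |Real.sin (L^α)| / α = L^(α-1) * |Main| / x := by
    rw [hMainDef, abs_div, abs_of_pos (by linarith : (0:ℝ) < α), abs_mul, abs_mul,
      abs_of_pos (Real.exp_pos L), abs_of_pos (Real.rpow_pos_of_pos hLpos _), ← hxL]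
    field_simp
    linear_combination (-|Real.sin (L^α)|) * hLL
  have hdiff : Real.log x ^ (α - 1) * |(∫ u in (1:ℝ)..x, (1 + Real.cos (Real.log u ^ α))) - x| / x
      - |Real.sin (L^α)| / α
      = L^(α-1) * (|(∫ u in (1:ℝ)..x, (1 + Real.cos (Real.log u ^ α))) - x| - |Main|) / x := by
    rw [hBe]
    ring
  rw [hdiff, abs_div, abs_of_pos hx0, abs_mul,
    abs_of_pos (Real.rpow_pos_of_pos hLpos (α-1))]
  rw [← hxL]
  have hfin : abs (|(∫ u in (1:ℝ)..x, (1 + Real.cos (Real.log u ^ α))) - x| - |Main|)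
      ≤ 12 + 4*(Real.exp (L/2) * L) + 5*(2^β * Real.exp L * L^(-β)) :=
    (abs_abs_sub_abs_le_abs_sub _ _).trans hkey
  rw [← hxL] at hfin
  gcongr

lemma stmt16_E_tendsto (α : ℝ) (hα : 1 < α) :
    Tendsto (fun L : ℝ => L ^ (α-1) * (12 + 4*(Real.exp (L/2) * L)
        + 5*(2^(min α (2*α-2)) * Real.exp L * L ^(-(min α (2*α-2))))) / Real.exp L)
      atTop (𝓝 0) := by
  set β := min α (2*α-2) with hβdef
  have hβpos : 0 < β := lt_min (by linarith) (by linarith)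
  have hβα : α - 1 < β := lt_min (by linarith) (by linarith)
  have h1 : Tendsto (fun L : ℝ => 12 * (L^(α-1) * Real.exp (-1*L))) atTop (𝓝 (12 * 0)) :=
    (tendsto_rpow_mul_exp_neg_mul_atTop_nhds_zero (α-1) 1 one_pos).const_mul 12
  have h2 : Tendsto (fun L : ℝ => 4 * (L^α * Real.exp (-(1/2)*L))) atTop (𝓝 (4 * 0)) :=
    (tendsto_rpow_mul_exp_neg_mul_atTop_nhds_zero α (1/2) (by norm_num)).const_mul 4
  have h3 : Tendsto (fun L : ℝ => (5*2^β) * L^(-(β-(α-1)))) atTop (𝓝 ((5*2^β) * 0)) :=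
    (tendsto_rpow_neg_atTop (by linarith)).const_mul _
  have hsum := (h1.add h2).add h3
  rw [show (12*0 + 4*0 + (5*2^β)*0 : ℝ) = 0 by ring] at hsum
  apply hsum.congr'
  filter_upwards [eventually_ge_atTop (1:ℝ)] with L hL
  have hLpos : (0:ℝ) < L := lt_of_lt_of_le one_pos hL
  have e1 : L^α = L^(α-1) * L := by
    rw [← Real.rpow_add_one (ne_of_gt hLpos)]
    norm_num
  have e2 : L^(-(β-(α-1))) = L^(α-1) * L^(-β) := by
    rw [← Real.rpow_add hLpos]
    ring_nf
  have e3 : Real.exp (-1*L) = 1 / Real.exp L := by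
    rw [neg_one_mul, Real.exp_neg]
    exact inv_eq_one_div _
  have e4 : Real.exp (-(1/2)*L) = Real.exp (L/2) / Real.exp L := by
    rw [show -(1/2:ℝ)*L = L/2 - L by ring, Real.exp_sub]
  rw [e1, e2, e3, e4]
  have hexp : Real.exp L ≠ 0 := ne_of_gt (Real.exp_pos L)
  field_simp

/-- For `S(x) = ∫₁ˣ (1 + cos((log u)^α)) du` one has
`limsup_{x→∞} (log x)^{α−1} |S(x) − x| / x = 1/α`; in particular `S(x) − x`
is not `O(x^{1−ε})` for any `ε > 0`, disproving Müger's conjecture. -/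
theorem stmt_16 (α : ℝ) (hα : 1 < α) :
    limsup (fun x : ℝ => Real.log x ^ (α - 1) *
        |(∫ u in (1:ℝ)..x, (1 + Real.cos (Real.log u ^ α))) - x| / x)
      atTop = 1 / α ∧
    ∀ ε : ℝ, 0 < ε →
      ¬ Asymptotics.IsBigO atTop
          (fun x : ℝ => (∫ u in (1:ℝ)..x, (1 + Real.cos (Real.log u ^ α))) - x)
          (fun x : ℝ => x ^ (1 - ε)) := by
  have hα0 : (0:ℝ) < α := by linarith
  set β := min α (2*α-2) with hβdef
  set φ : ℝ → ℝ := fun x : ℝ => Real.log x ^ (α - 1) *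
      |(∫ u in (1:ℝ)..x, (1 + Real.cos (Real.log u ^ α))) - x| / x with hφdef
  set E : ℝ → ℝ := fun L => L ^ (α-1) * (12 + 4*(Real.exp (L/2) * L)
      + 5*(2^β * Real.exp L * L ^(-β))) / Real.exp L with hEdef
  have hEten : Tendsto E atTop (𝓝 0) := stmt16_E_tendsto α hα
  have hEx : Tendsto (fun x : ℝ => E (Real.log x)) atTop (𝓝 0) :=
    hEten.comp Real.tendsto_log_atTop
  have hest : ∀ x : ℝ, Real.exp 1 ≤ x →
      |φ x - |Real.sin (Real.log x ^ α)| / α| ≤ E (Real.log x) := by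
    intro x hx
    simpa only [hφdef, hEdef] using stmt16_phi_est α hα hx
  have hup : ∀ ε : ℝ, 0 < ε → ∀ᶠ x in atTop, φ x ≤ 1/α + ε := by
    intro ε hε
    filter_upwards [eventually_ge_atTop (Real.exp 1), hEx.eventually_lt_const hε] with x hx hEx'
    have h := (abs_le.mp (hest x hx)).2
    have hsin : |Real.sin (Real.log x ^ α)| / α ≤ 1/α := by
      gcongr
      exact Real.abs_sin_le_one _
    linarith
  have hbdd : IsBoundedUnder (· ≤ ·) atTop φ :=
    isBoundedUnder_of_eventually_le (hup 1 one_pos)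
  have hnonneg : ∀ᶠ x in atTop, (0:ℝ) ≤ φ x := by
    filter_upwards [eventually_ge_atTop (1:ℝ)] with x hx1
    simp only [hφdef]
    exact div_nonneg (mul_nonneg (Real.rpow_nonneg (Real.log_nonneg hx1) _) (abs_nonneg _))
      (by linarith)
  have hcb : IsCoboundedUnder (· ≤ ·) atTop φ :=
    isCoboundedUnder_le_of_eventually_le atTop hnonneg
  have hfreq : ∀ ε : ℝ, 0 < ε → ∃ᶠ x in atTop, 1/α - ε ≤ φ x := by
    intro ε hε
    rw [frequently_atTop]
    intro b
    have hc : Tendsto (fun n : ℕ => (Real.pi/2 + n*(2*Real.pi))) atTop atTop := by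
      apply tendsto_atTop_add_const_left
      exact tendsto_natCast_atTop_atTop.atTop_mul_const (by positivity)
    have hT : Tendsto (fun n : ℕ => (Real.pi/2 + n*(2*Real.pi))^(1/α)) atTop atTop :=
      (tendsto_rpow_atTop (by positivity : (0:ℝ) < 1/α)).comp hc
    have hxT : Tendsto (fun n : ℕ => Real.exp ((Real.pi/2 + n*(2*Real.pi))^(1/α))) atTop atTop :=
      Real.tendsto_exp_atTop.comp hT
    have h1 := hxT.eventually_ge_atTop b
    have h2 := hxT.eventually_ge_atTop (Real.exp 1)
    have h3 := (hEten.comp hT).eventually_lt_const hε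
    obtain ⟨n, hn1, hn2, hn3⟩ := (h1.and (h2.and h3)).exists
    set c : ℝ := Real.pi/2 + n*(2*Real.pi) with hcdef
    set T : ℝ := c^(1/α) with hTdef
    have hcpos : (0:ℝ) < c := by positivity
    refine ⟨Real.exp T, hn1, ?_⟩
    have hTα : T^α = c := by
      rw [hTdef, ← Real.rpow_mul hcpos.le, one_div, inv_mul_cancel₀ (ne_of_gt hα0),
        Real.rpow_one]
    have hsin1 : Real.sin (T^α) = 1 := by
      rw [hTα, hcdef, Real.sin_add_nat_mul_two_pi, Real.sin_pi_div_two]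
    have h := hest (Real.exp T) hn2
    rw [Real.log_exp, hsin1, abs_one] at h
    have h' := (abs_le.mp h).1
    have hET : E T < ε := hn3
    linarith
  have hge : 1/α ≤ limsup φ atTop := by
    by_contra hlt
    push_neg at hlt
    have hε : (0:ℝ) < (1/α - limsup φ atTop)/2 := by linarith
    have h := le_limsup_of_frequently_le (hfreq _ hε) hbdd
    linarith
  have hle : limsup φ atTop ≤ 1/α := by
    by_contra hlt
    push_neg at hlt
    have hε : (0:ℝ) < (limsup φ atTop - 1/α)/2 := by linarith
    have h := limsup_le_of_le hcb (hup _ hε)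
    linarith
  have hpart1 : limsup φ atTop = 1/α := le_antisymm hle hge
  refine ⟨hpart1, ?_⟩
  intro ε hε hO
  obtain ⟨C, hC⟩ := hO.bound
  have hbound : ∀ᶠ x in atTop, φ x ≤ C * (Real.log x ^ (α-1) * x^(-ε)) := by
    filter_upwards [hC, eventually_ge_atTop (1:ℝ)] with x hCx hx1
    have hx0 : (0:ℝ) < x := lt_of_lt_of_le one_pos hx1
    have hlog0 : (0:ℝ) ≤ Real.log x := Real.log_nonneg hx1
    rw [Real.norm_eq_abs, Real.norm_eq_abs, abs_of_nonneg (Real.rpow_nonneg hx0.le _)] at hCx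
    have hstep : φ x ≤ Real.log x ^ (α-1) * (C * x^(1-ε)) / x := by
      simp only [hφdef]
      gcongr
    have hxx : x^(1-ε) = x^(-ε) * x := by
      rw [show (1:ℝ)-ε = -ε+1 by ring, Real.rpow_add_one (ne_of_gt hx0)]
    calc φ x ≤ Real.log x ^ (α-1) * (C * x^(1-ε)) / x := hstep
      _ = C * (Real.log x ^ (α-1) * x^(-ε)) := by
          rw [hxx]
          field_simp
  have hten : Tendsto (fun x : ℝ => C * (Real.log x ^ (α-1) * x^(-ε))) atTop (𝓝 (C * 0)) := by
    apply Tendsto.const_mul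
    have hcomp := (tendsto_rpow_mul_exp_neg_mul_atTop_nhds_zero (α-1) ε hε).comp
      Real.tendsto_log_atTop
    apply hcomp.congr'
    filter_upwards [eventually_gt_atTop (0:ℝ)] with x hx0
    show Real.log x ^ (α-1) * Real.exp (-ε * Real.log x) = Real.log x ^(α-1) * x^(-ε)
    rw [Real.rpow_def_of_pos hx0]
    ring_nf
  rw [mul_zero] at hten
  have hsmall2 : ∀ᶠ x in atTop, φ x ≤ 1/(2*α) := by
    filter_upwards [hbound, hten.eventually_lt_const (by positivity : (0:ℝ) < 1/(2*α))] with x h1 h2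
    linarith
  have hfin := limsup_le_of_le hcb hsmall2
  rw [hpart1] at hfin
  have hcontra : 1/(2*α) < 1/α := by
    rw [div_lt_div_iff₀ (by positivity) (by positivity)]
    nlinarith
  linarith
end

section
/- For every integer k ≥ 0, lim_{ε→0⁺} [ ∫_ε^∞ e^{−t} t^{−k−1} dt − Σ_{j=0}^{k−1} (−1)^j ε^{j−k} / ( j! (k−j) ) + (−1)^k (log ε)/k! ] = ( (−1)^k / k! ) ( −γ + Σ_{j=1}^{k} 1/j ), where γ is the Euler–Mascheroni constant (for k = 0 the first sum is empty and the value is −γ). -/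
open MeasureTheory Set Filter

lemma abs_log_le (t : ℝ) (ht : 0 < t) :
    |Real.log t| ≤ 2 * t ^ (-(1:ℝ)/2) + t := by
  rcases le_or_gt 1 t with h | h
  · rw [abs_of_nonneg (Real.log_nonneg h)]
    have h1 : Real.log t ≤ t - 1 := Real.log_le_sub_one_of_pos ht
    have h2 : (0:ℝ) ≤ t ^ (-(1:ℝ)/2) := Real.rpow_nonneg ht.le _
    linarith
  · rw [abs_of_nonpos (Real.log_nonpos ht.le h.le)]
    have h1 : Real.log (t ^ (-(1:ℝ)/2)) ≤ t ^ (-(1:ℝ)/2) - 1 :=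
      Real.log_le_sub_one_of_pos (Real.rpow_pos_of_pos ht _)
    rw [Real.log_rpow ht] at h1
    linarith

lemma integrableOn_log_mul_exp :
    IntegrableOn (fun t : ℝ => Real.log t * Real.exp (-t)) (Ioi (0:ℝ)) := by
  have h1 := Real.GammaIntegral_convergent (s := 1/2) (by norm_num)
  have h2 := Real.GammaIntegral_convergent (s := 2) (by norm_num)
  have hI : IntegrableOn
      (fun t : ℝ => Real.exp (-t) * t ^ ((1:ℝ)/2 - 1) * 2 + Real.exp (-t) * t ^ ((2:ℝ) - 1))
      (Ioi (0:ℝ)) := (h1.mul_const 2).add h2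
  refine hI.mono' ?_ ?_
  · exact (Real.measurable_log.mul (Real.measurable_exp.comp measurable_neg)).aestronglyMeasurable
  · filter_upwards [ae_restrict_mem measurableSet_Ioi] with t ht
    have ht0 : (0:ℝ) < t := ht
    have hexp : (0:ℝ) < Real.exp (-t) := Real.exp_pos _
    rw [Real.norm_eq_abs, abs_mul, abs_of_pos hexp]
    have key := abs_log_le t ht0
    have e1 : t ^ ((1:ℝ)/2 - 1) = t ^ (-(1:ℝ)/2) := by norm_num
    have e2 : t ^ ((2:ℝ) - 1) = t := by
      rw [show (2:ℝ) - 1 = 1 by norm_num, Real.rpow_one]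
    rw [e1, e2]
    nlinarith [hexp.le, mul_le_mul_of_nonneg_right key hexp.le]

lemma integral_log_mul_exp :
    ∫ t in Ioi (0:ℝ), Real.log t * Real.exp (-t) = -Real.eulerMascheroniConstant := by
  have h1 := Complex.hasDerivAt_GammaIntegral (s := 1) (by simp)
  have h2 : HasDerivAt Complex.Gamma
      (∫ t : ℝ in Ioi 0, (t:ℂ) ^ ((1:ℂ) - 1) * (Real.log t * Real.exp (-t))) 1 := by
    refine h1.congr_of_eventuallyEq ?_
    have hopen : IsOpen {s : ℂ | 0 < s.re} := isOpen_lt continuous_const Complex.continuous_re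
    filter_upwards [hopen.mem_nhds (by simp : (0:ℝ) < (1:ℂ).re)] with s hs
    exact Complex.Gamma_eq_integral hs
  have h3 : (∫ t : ℝ in Ioi 0, (t:ℂ) ^ ((1:ℂ) - 1) * (Real.log t * Real.exp (-t)))
      = ((∫ t in Ioi (0:ℝ), Real.log t * Real.exp (-t) : ℝ) : ℂ) := by
    rw [show ((∫ t in Ioi (0:ℝ), Real.log t * Real.exp (-t) : ℝ) : ℂ)
        = ∫ t in Ioi (0:ℝ), ((Real.log t * Real.exp (-t) : ℝ) : ℂ) from (integral_ofReal).symm]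
    refine setIntegral_congr_fun measurableSet_Ioi fun t ht => ?_
    rw [sub_self, Complex.cpow_zero]
    push_cast
    ring
  rw [h3] at h2
  have h4 : HasDerivAt Real.Gamma
      (((∫ t in Ioi (0:ℝ), Real.log t * Real.exp (-t) : ℝ) : ℂ)).re 1 := by
    have := h2.real_of_complex
    refine this.congr_of_eventuallyEq (Eventually.of_forall fun x => ?_)
    rw [Real.Gamma]
  rw [Complex.ofReal_re] at h4
  exact h4.unique Real.hasDerivAt_Gamma_one

lemma tendsto_tail_integral (f : ℝ → ℝ) (hf : IntegrableOn f (Ioi (0:ℝ))) :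
    Tendsto (fun ε : ℝ => ∫ t in Ioi ε, f t) (nhdsWithin 0 (Ioi 0))
      (nhds (∫ t in Ioi (0:ℝ), f t)) := by
  have key : Tendsto (fun ε : ℝ => ∫ t in Ioc 0 ε, f t) (nhdsWithin 0 (Ioi 0)) (nhds 0) := by
    have h := hf.tendsto_setIntegral_nhds_zero
      (l := nhdsWithin (0:ℝ) (Ioi 0)) (s := fun ε : ℝ => Ioc 0 ε) ?_
    · refine h.congr fun ε => ?_
      rw [Measure.restrict_restrict measurableSet_Ioc,
        inter_eq_left.mpr Ioc_subset_Ioi_self]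
    · have : Tendsto (fun ε : ℝ => ENNReal.ofReal ε) (nhdsWithin 0 (Ioi 0)) (nhds 0) := by
        rw [show (0 : ENNReal) = ENNReal.ofReal 0 by simp]
        exact (ENNReal.continuous_ofReal.tendsto 0).comp nhdsWithin_le_nhds
      refine this.congr fun ε => ?_
      simp [Function.comp, Measure.restrict_apply measurableSet_Ioc,
        inter_eq_left.mpr Ioc_subset_Ioi_self, Real.volume_Ioc]
  have : Tendsto (fun ε : ℝ => (∫ t in Ioi (0:ℝ), f t) - ∫ t in Ioc 0 ε, f t)
      (nhdsWithin 0 (Ioi 0)) (nhds ((∫ t in Ioi (0:ℝ), f t) - 0)) :=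
    tendsto_const_nhds.sub key
  rw [sub_zero] at this
  refine this.congr' ?_
  filter_upwards [self_mem_nhdsWithin] with ε (hε : 0 < ε)
  rw [sub_eq_iff_eq_add', ← Ioc_union_Ioi_eq_Ioi hε.le, setIntegral_union
    (Ioc_disjoint_Ioi le_rfl) measurableSet_Ioi
    (hf.mono_set Ioc_subset_Ioi_self) (hf.mono_set (Ioi_subset_Ioi hε.le))]

lemma integrableOn_exp_rpow {c ε : ℝ} (hc : c ≤ 0) (hε : 0 < ε) :
    IntegrableOn (fun t : ℝ => Real.exp (-t) * t ^ c) (Ioi ε) := by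
  have hI : IntegrableOn (fun t : ℝ => ε ^ c * Real.exp (-(1:ℝ) * t)) (Ioi ε) :=
    (exp_neg_integrableOn_Ioi ε one_pos).const_mul _
  refine hI.mono' ?_ ?_
  · refine (ContinuousOn.aestronglyMeasurable ?_ measurableSet_Ioi)
    refine ContinuousOn.mul (Continuous.continuousOn (by continuity)) ?_
    exact fun t ht => (Real.continuousAt_rpow_const t c
      (Or.inl (ne_of_gt (hε.trans ht)))).continuousWithinAt
  · filter_upwards [ae_restrict_mem measurableSet_Ioi] with t ht
    have htε : ε < t := ht
    have ht0 : (0:ℝ) < t := hε.trans htε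
    rw [Real.norm_eq_abs, abs_mul, abs_of_pos (Real.exp_pos _),
      abs_of_pos (Real.rpow_pos_of_pos ht0 _), neg_one_mul]
    have : t ^ c ≤ ε ^ c := Real.rpow_le_rpow_of_nonpos hε htε.le hc
    nlinarith [Real.exp_pos (-t), Real.rpow_pos_of_pos ht0 c]

lemma tendsto_exp_rpow_atTop (c ε : ℝ) (hc : c ≤ 0) (hε : 0 < ε) :
    Tendsto (fun t : ℝ => Real.exp (-t) * t ^ c) atTop (nhds 0) := by
  refine squeeze_zero_norm' (a := fun t => Real.exp (-t) * ε ^ c) ?_ ?_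
  · filter_upwards [Ioi_mem_atTop ε] with t ht
    have ht0 : (0:ℝ) < t := hε.trans ht
    rw [Real.norm_eq_abs, abs_mul, abs_of_pos (Real.exp_pos _),
      abs_of_pos (Real.rpow_pos_of_pos ht0 _)]
    have h1 : t ^ c ≤ ε ^ c := Real.rpow_le_rpow_of_nonpos hε (le_of_lt ht) hc
    exact mul_le_mul_of_nonneg_left h1 (Real.exp_pos _).le
  · have := Real.tendsto_exp_neg_atTop_nhds_zero.mul_const (ε ^ c)
    simpa using this

lemma recF {c ε : ℝ} (hc : 0 < c) (hε : 0 < ε) :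
    ∫ t in Ioi ε, Real.exp (-t) * t ^ (-c - 1) =
      ε ^ (-c) * Real.exp (-ε) / c - (∫ t in Ioi ε, Real.exp (-t) * t ^ (-c)) / c := by
  set g : ℝ → ℝ := fun t => -(Real.exp (-t) * t ^ (-c)) / c with hg_def
  have hderiv : ∀ x ∈ Ioi ε, HasDerivAt g
      (Real.exp (-x) * x ^ (-c - 1) + Real.exp (-x) * x ^ (-c) / c) x := by
    intro x hx
    have hx0 : 0 < x := hε.trans hx
    have h1 : HasDerivAt (fun t : ℝ => Real.exp (-t)) (-Real.exp (-x)) x := by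
      have h := (Real.hasDerivAt_exp (-x)).comp x (hasDerivAt_neg x)
      simp at h
      exact h
    have h2 : HasDerivAt (fun t : ℝ => t ^ (-c)) (-c * x ^ (-c - 1)) x :=
      Real.hasDerivAt_rpow_const (Or.inl hx0.ne')
    have h3 := ((h1.mul h2).neg).div_const c
    refine h3.congr_deriv ?_
    field_simp
    ring
  have hcont : ContinuousWithinAt g (Ici ε) ε := by
    have h1 : HasDerivAt (fun t : ℝ => Real.exp (-t)) (-Real.exp (-ε)) ε := by
      have h := (Real.hasDerivAt_exp (-ε)).comp ε (hasDerivAt_neg ε)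
      simp at h
      exact h
    have h2 : HasDerivAt (fun t : ℝ => t ^ (-c)) (-c * ε ^ (-c - 1)) ε :=
      Real.hasDerivAt_rpow_const (Or.inl hε.ne')
    exact (((h1.mul h2).neg).div_const c).continuousAt.continuousWithinAt
  have hint1 : IntegrableOn (fun t : ℝ => Real.exp (-t) * t ^ (-c - 1)) (Ioi ε) :=
    integrableOn_exp_rpow (by linarith) hε
  have hint2 : IntegrableOn (fun t : ℝ => Real.exp (-t) * t ^ (-c)) (Ioi ε) :=
    integrableOn_exp_rpow (by linarith) hε
  have hint : IntegrableOn
      (fun x : ℝ => Real.exp (-x) * x ^ (-c - 1) + Real.exp (-x) * x ^ (-c) / c)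
      (Ioi ε) := hint1.add (hint2.div_const c)
  have htend : Tendsto g atTop (nhds 0) := by
    have := ((tendsto_exp_rpow_atTop (-c) ε (by linarith) hε).neg).div_const c
    simpa using this
  have key := integral_Ioi_of_hasDerivAt_of_tendsto hcont hderiv hint htend
  rw [integral_add hint1 (hint2.div_const c), integral_div] at key
  have hgε : g ε = -(Real.exp (-ε) * ε ^ (-c)) / c := rfl
  rw [hgε] at key
  have hc' : c ≠ 0 := hc.ne'
  field_simp at key ⊢
  linarith

lemma base_identity {ε : ℝ} (hε : 0 < ε) :
    ∫ t in Ioi ε, Real.exp (-t) * t ^ (-1:ℝ) =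
      (∫ t in Ioi ε, Real.log t * Real.exp (-t)) - Real.exp (-ε) * Real.log ε := by
  set g : ℝ → ℝ := fun t => -(Real.exp (-t) * Real.log t) with hg_def
  have hderiv : ∀ x ∈ Ioi ε, HasDerivAt g
      (Real.log x * Real.exp (-x) - Real.exp (-x) * x ^ (-1:ℝ)) x := by
    intro x hx
    have hx0 : 0 < x := hε.trans hx
    have h1 : HasDerivAt (fun t : ℝ => Real.exp (-t)) (-Real.exp (-x)) x := by
      have h := (Real.hasDerivAt_exp (-x)).comp x (hasDerivAt_neg x)
      simp at h
      exact h
    have h2 : HasDerivAt Real.log x⁻¹ x := Real.hasDerivAt_log hx0.ne'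
    have h3 := (h1.mul h2).neg
    refine h3.congr_deriv ?_
    rw [Real.rpow_neg_one]
    ring
  have hcont : ContinuousWithinAt g (Ici ε) ε := by
    have h1 : HasDerivAt (fun t : ℝ => Real.exp (-t)) (-Real.exp (-ε)) ε := by
      have h := (Real.hasDerivAt_exp (-ε)).comp ε (hasDerivAt_neg ε)
      simp at h
      exact h
    exact ((h1.mul (Real.hasDerivAt_log hε.ne')).neg).continuousAt.continuousWithinAt
  have hint1 : IntegrableOn (fun t : ℝ => Real.log t * Real.exp (-t)) (Ioi ε) :=
    integrableOn_log_mul_exp.mono_set (Ioi_subset_Ioi hε.le)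
  have hint2 : IntegrableOn (fun t : ℝ => Real.exp (-t) * t ^ (-1:ℝ)) (Ioi ε) :=
    integrableOn_exp_rpow (by norm_num) hε
  have htend : Tendsto g atTop (nhds 0) := by
    refine squeeze_zero_norm' (a := fun x : ℝ => x ^ (1:ℕ) * Real.exp (-x)) ?_
      (Real.tendsto_pow_mul_exp_neg_atTop_nhds_zero 1)
    filter_upwards [Ioi_mem_atTop (1:ℝ)] with x hx
    have hx1 : (1:ℝ) < x := hx
    have hl0 : 0 ≤ Real.log x := Real.log_nonneg hx1.le
    have hlx : Real.log x ≤ x := (Real.log_le_sub_one_of_pos (by linarith)).trans (by linarith)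
    rw [hg_def]
    simp only [norm_neg, Real.norm_eq_abs, pow_one]
    rw [abs_mul, abs_of_pos (Real.exp_pos _), abs_of_nonneg hl0]
    nlinarith [Real.exp_pos (-x)]
  have key := integral_Ioi_of_hasDerivAt_of_tendsto hcont hderiv
    (hint1.sub hint2) htend
  rw [integral_sub hint1 hint2] at key
  have hgε : g ε = -(Real.exp (-ε) * Real.log ε) := rfl
  rw [hgε] at key
  linarith

lemma base_tendsto : Tendsto
    (fun ε : ℝ => (∫ t in Ioi ε, Real.exp (-t) * t ^ (-1:ℝ)) + Real.log ε)
    (nhdsWithin 0 (Ioi 0)) (nhds (-Real.eulerMascheroniConstant)) := by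
  have h1 := tendsto_tail_integral _ integrableOn_log_mul_exp
  rw [integral_log_mul_exp] at h1
  have h2 : Tendsto (fun ε : ℝ => (1 - Real.exp (-ε)) * Real.log ε)
      (nhdsWithin 0 (Ioi 0)) (nhds 0) := by
    refine squeeze_zero_norm' (a := fun ε : ℝ => |Real.log ε * ε ^ (1:ℝ)|) ?_
      (by simpa using (tendsto_log_mul_rpow_nhdsGT_zero one_pos).abs)
    filter_upwards [self_mem_nhdsWithin] with ε (hε : 0 < ε)
    rw [Real.norm_eq_abs, abs_mul, abs_mul, Real.rpow_one]
    have hb1 : Real.exp (-ε) ≤ 1 := Real.exp_le_one_iff.mpr (by linarith)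
    have hb2 : 1 - ε ≤ Real.exp (-ε) := by
      have := Real.add_one_le_exp (-ε); linarith
    rw [abs_of_nonneg (by linarith : (0:ℝ) ≤ 1 - Real.exp (-ε))]
    have : |Real.log ε| * (1 - Real.exp (-ε)) ≤ |Real.log ε| * ε :=
      mul_le_mul_of_nonneg_left (by linarith) (abs_nonneg _)
    rw [abs_of_pos hε]
    linarith [this, mul_comm (|Real.log ε|) (1 - Real.exp (-ε))]
  have h3 := h1.add h2
  rw [add_zero] at h3
  refine h3.congr' ?_
  filter_upwards [self_mem_nhdsWithin] with ε (hε : 0 < ε)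
  rw [base_identity hε]
  ring

lemma remainder_tendsto (n : ℕ) :
    Tendsto (fun ε : ℝ =>
        (Real.exp (-ε) - ∑ j ∈ Finset.range n, (-1:ℝ)^j * ε^j / j.factorial) * ε ^ (-(n:ℝ)))
      (nhdsWithin 0 (Ioi 0)) (nhds ((-1:ℝ)^n / n.factorial)) := by
  have hr0 : Tendsto (fun ε : ℝ =>
      (Real.exp (-ε) - ∑ j ∈ Finset.range (n+1), (-ε)^j / j.factorial) * ε ^ (-(n:ℝ)))
      (nhdsWithin 0 (Ioi 0)) (nhds 0) := by
    set C : ℝ := ((n+1).succ : ℝ) / (((n+1).factorial : ℝ) * ((n+1 : ℕ) : ℝ)) with hC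
    refine squeeze_zero_norm' (a := fun ε : ℝ => C * ε) ?_ ?_
    · filter_upwards [Ioc_mem_nhdsGT_of_mem (by exact ⟨le_refl 0, zero_lt_one⟩)]
        with ε hε
      obtain ⟨hε0, hε1⟩ := hε
      have hb := Real.exp_bound (x := -ε) (by rw [abs_neg, abs_of_pos hε0]; exact hε1)
        (n := n + 1) (Nat.succ_pos n)
      rw [Real.norm_eq_abs, abs_mul, abs_of_pos (Real.rpow_pos_of_pos hε0 _)]
      have h2 : |(-ε)| ^ (n+1) = ε ^ (n+1) := by rw [abs_neg, abs_of_pos hε0]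
      rw [h2] at hb
      have hb' : |Real.exp (-ε) - ∑ j ∈ Finset.range (n+1), (-ε)^j / j.factorial|
          ≤ ε ^ (n+1) * C := hb
      have h3 : ε ^ (n+1) * ε ^ (-(n:ℝ)) = ε := by
        rw [← Real.rpow_natCast ε (n+1), ← Real.rpow_add hε0]
        push_cast
        rw [show ((n:ℝ) + 1 + -(n:ℝ)) = 1 by ring, Real.rpow_one]
      calc |Real.exp (-ε) - ∑ j ∈ Finset.range (n+1), (-ε)^j / j.factorial| * ε ^ (-(n:ℝ))
          ≤ (ε ^ (n+1) * C) * ε ^ (-(n:ℝ)) :=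
            mul_le_mul_of_nonneg_right hb' (Real.rpow_pos_of_pos hε0 _).le
        _ = C * ε := by rw [mul_comm (ε ^ (n+1)) C, mul_assoc, h3]
    · have h : Tendsto (fun ε : ℝ => C * ε) (nhds 0) (nhds 0) := by
        simpa using (tendsto_id (x := nhds (0:ℝ))).const_mul C
      exact h.mono_left nhdsWithin_le_nhds
  have hmain : Tendsto (fun ε : ℝ => (-1:ℝ)^n / n.factorial +
      (Real.exp (-ε) - ∑ j ∈ Finset.range (n+1), (-ε)^j / j.factorial) * ε ^ (-(n:ℝ)))
      (nhdsWithin 0 (Ioi 0)) (nhds ((-1:ℝ)^n / n.factorial + 0)) :=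
    tendsto_const_nhds.add hr0
  rw [add_zero] at hmain
  refine hmain.congr' ?_
  filter_upwards [self_mem_nhdsWithin] with ε (hε : 0 < ε)
  have hsum : ∑ j ∈ Finset.range n, (-ε)^j / (j.factorial:ℝ)
      = ∑ j ∈ Finset.range n, (-1:ℝ)^j * ε^j / j.factorial := by
    refine Finset.sum_congr rfl fun j _ => ?_
    rw [neg_pow]
  have hpow : (-ε)^n / (n.factorial:ℝ) * ε ^ (-(n:ℝ)) = (-1:ℝ)^n / n.factorial := by
    have h3 : (ε:ℝ) ^ n * ε ^ (-(n:ℝ)) = 1 := by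
      rw [← Real.rpow_natCast ε n, ← Real.rpow_add hε, add_neg_cancel, Real.rpow_zero]
    rw [neg_pow]
    calc (-1:ℝ)^n * ε^n / (n.factorial:ℝ) * ε ^ (-(n:ℝ))
        = (-1:ℝ)^n * (ε^n * ε ^ (-(n:ℝ))) / n.factorial := by ring
      _ = (-1:ℝ)^n / n.factorial := by rw [h3, mul_one]
  rw [Finset.sum_range_succ, hsum, sub_add_eq_sub_sub, sub_mul, hpow]
  ring

lemma sum_identity (k : ℕ) {ε : ℝ} (hε : 0 < ε) :
    (∑ j ∈ Finset.range (k+1),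
        (-1:ℝ)^j * ε ^ ((j:ℝ) - ((k:ℝ)+1)) / (j.factorial * (((k:ℝ)+1) - j)))
      + (∑ j ∈ Finset.range k,
        (-1:ℝ)^j * ε ^ ((j:ℝ) - k) / (j.factorial * ((k:ℝ) - j))) / ((k:ℝ)+1)
    = (∑ j ∈ Finset.range (k+1), (-1:ℝ)^j * ε^j / j.factorial)
        * ε ^ (-((k:ℝ)+1)) / ((k:ℝ)+1) := by
  have hfac : ∀ j : ℕ, ((j.factorial : ℝ)) ≠ 0 :=
    fun j => Nat.cast_ne_zero.mpr (Nat.factorial_ne_zero j)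
  have hk1 : ((k:ℝ)+1) ≠ 0 := by positivity
  set A : ℕ → ℝ := fun j =>
    (-1:ℝ)^j * ε ^ ((j:ℝ) - ((k:ℝ)+1)) / (j.factorial * (((k:ℝ)+1) - j)) with hA
  set B : ℕ → ℝ := fun j =>
    (-1:ℝ)^j * ε^j / j.factorial * ε ^ (-((k:ℝ)+1)) / ((k:ℝ)+1) with hB
  set D : ℕ → ℝ := fun j =>
    (-1:ℝ)^j * ε ^ ((j:ℝ) - ((k:ℝ)+1)) * j
      / (j.factorial * (((k:ℝ)+1) - j) * ((k:ℝ)+1)) with hD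
  set C : ℕ → ℝ := fun j =>
    (-1:ℝ)^j * ε ^ ((j:ℝ) - k) / (j.factorial * ((k:ℝ) - j)) with hC
  have hAB : ∀ j ∈ Finset.range (k+1), A j - B j = D j := by
    intro j hj
    have hj' : j ≤ k := Nat.lt_succ_iff.mp (Finset.mem_range.mp hj)
    have hjk : (j:ℝ) ≤ k := Nat.cast_le.mpr hj'
    have h2 : (((k:ℝ)+1) - j) ≠ 0 := by linarith
    have h1 : ε ^ ((j:ℝ) - ((k:ℝ)+1)) = ε^j * ε ^ (-((k:ℝ)+1)) := by
      rw [← Real.rpow_natCast ε j, ← Real.rpow_add hε]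
      congr 1
    rw [hA, hB, hD]
    simp only
    rw [h1]
    field_simp
    ring
  have hsub : (∑ j ∈ Finset.range (k+1), A j) - (∑ j ∈ Finset.range (k+1), B j)
      = ∑ j ∈ Finset.range (k+1), D j := by
    rw [← Finset.sum_sub_distrib]
    exact Finset.sum_congr rfl hAB
  have hDC : ∑ j ∈ Finset.range (k+1), D j
      = -((∑ j ∈ Finset.range k, C j) / ((k:ℝ)+1)) := by
    rw [Finset.sum_range_succ']
    have hD0 : D 0 = 0 := by
      rw [hD]; simp
    rw [hD0, add_zero, Finset.sum_div, ← Finset.sum_neg_distrib]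
    refine Finset.sum_congr rfl fun i hi => ?_
    have hik : i < k := Finset.mem_range.mp hi
    have hik' : (i:ℝ) < k := by exact_mod_cast hik
    have hki : ((k:ℝ) - i) ≠ 0 := by linarith
    rw [hD, hC]
    simp only
    push_cast [Nat.factorial_succ]
    rw [show ((i:ℝ) + 1 - ((k:ℝ)+1)) = (i:ℝ) - k from by ring]
    rw [show ((k:ℝ) + 1 - ((i:ℝ)+1)) = (k:ℝ) - i from by ring]
    field_simp
    ring
  have hBsum : (∑ j ∈ Finset.range (k+1), (-1:ℝ)^j * ε^j / j.factorial)
      * ε ^ (-((k:ℝ)+1)) / ((k:ℝ)+1) = ∑ j ∈ Finset.range (k+1), B j := by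
    rw [Finset.sum_mul, Finset.sum_div]
  rw [hBsum]
  have := hsub.trans hDC
  linarith [this]


/-- The Hadamard finite part `Fp ∫₀^∞ e^{−t} t^{−k−1} dt` equals
`((−1)^k/k!)(−γ + ∑_{j=1}^k 1/j)`, where `γ` is the Euler–Mascheroni
constant. -/
theorem stmt_17 (k : ℕ) :
    Tendsto (fun ε : ℝ =>
        (∫ t in Ioi ε, Real.exp (-t) * t ^ (-(k:ℝ) - 1)) -
          (∑ j ∈ Finset.range k,
            (-1:ℝ) ^ j * ε ^ ((j:ℝ) - k) / (j.factorial * ((k:ℝ) - j))) +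
          (-1:ℝ) ^ k * Real.log ε / k.factorial)
      (nhdsWithin 0 (Ioi 0))
      (nhds ((-1:ℝ) ^ k / k.factorial *
        (-Real.eulerMascheroniConstant +
          ∑ j ∈ Finset.range k, 1 / ((j:ℝ) + 1)))) := by
  induction k with
  | zero =>
    have h := base_tendsto
    have hval : ((-1:ℝ) ^ 0 / (Nat.factorial 0 : ℝ) *
        (-Real.eulerMascheroniConstant + ∑ j ∈ Finset.range 0, 1 / ((j:ℝ) + 1)))
        = -Real.eulerMascheroniConstant := by simp
    rw [hval]
    refine h.congr fun ε => ?_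
    norm_num
  | succ k ih =>
    have hrem := (remainder_tendsto (k+1)).div_const ((k:ℝ)+1)
    have h1 := (ih.neg.div_const ((k:ℝ)+1)).add hrem
    have hfact : (((k+1).factorial : ℕ) : ℝ) = ((k:ℝ)+1) * (k.factorial : ℝ) := by
      push_cast [Nat.factorial_succ]; ring
    have hval : -((-1:ℝ) ^ k / k.factorial *
          (-Real.eulerMascheroniConstant + ∑ j ∈ Finset.range k, 1 / ((j:ℝ) + 1)))
            / ((k:ℝ)+1)
          + ((-1:ℝ) ^ (k+1) / ((k+1).factorial : ℝ)) / ((k:ℝ)+1)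
        = (-1:ℝ) ^ (k+1) / ((k+1).factorial : ℝ) *
          (-Real.eulerMascheroniConstant + ∑ j ∈ Finset.range (k+1), 1 / ((j:ℝ) + 1)) := by
      rw [Finset.sum_range_succ, hfact]
      have hk0 : ((k.factorial : ℝ)) ≠ 0 := Nat.cast_ne_zero.mpr (Nat.factorial_ne_zero k)
      have hk1 : ((k:ℝ)+1) ≠ 0 := by positivity
      field_simp
      ring
    rw [← hval]
    refine h1.congr' ?_
    filter_upwards [self_mem_nhdsWithin] with ε (hε : 0 < ε)
    have hSI := sum_identity k hε
    have hrecF := recF (c := (k:ℝ)+1) (by positivity) hε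
    rw [show -((k:ℝ)+1) = -(k:ℝ) - 1 from by ring] at hrecF
    push_cast [Nat.factorial_succ]
    rw [show -((k:ℝ) + 1) - 1 = -(k:ℝ) - 1 - 1 from by ring]
    rw [hrecF]
    rw [show -((k:ℝ) + 1) = -(k:ℝ) - 1 from by ring] at hSI ⊢
    have hk0 : ((k.factorial : ℝ)) ≠ 0 := Nat.cast_ne_zero.mpr (Nat.factorial_ne_zero k)
    have hk1 : ((k:ℝ)+1) ≠ 0 := by positivity
    have hlog : (-1:ℝ)^(k+1) * Real.log ε / (((k:ℝ)+1) * (k.factorial : ℝ))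
        = -((-1:ℝ)^k * Real.log ε / (k.factorial : ℝ)) / ((k:ℝ)+1) := by
      field_simp
      ring
    linear_combination hSI - hlog
end
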